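/- arXiv:math/0110247 — 5 statements merged into one kernel-verified Lean document; each statement's English description precedes it below -/
import Mathlib

section
/- Let F : E → C be a category fibered in groupoids over a small category C, let X be an object of C, and let E_X be the fiber groupoid over X. Then: (1) for every object X' of E with F(X') = X there exists a functor G : C/X → E over C (i.e. with F ∘ G equal to the forgetful functor C/X → C) such that G(id_X) = X'; (2) if G, G' : C/X → E are two such functors over C and f : G(id_X) → G'(id_X) is a morphism of E lying over id_X, then there is a unique natural isomorphism φ : G → G' whose components lie over identity morphisms of C and with φ(id_X) = f. Consequently, evaluation at id_X gives an equivalence of groupoids Grpd(C/X, E) → E_X that is surjective on objects. -/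
open CategoryTheory

universe u v

/-- A functor `F : E ⥤ C` is a category fibered in groupoids if morphisms of `C`
lift (condition (1)) and lifts of commutative triangles exist uniquely (condition (2)). -/
structure IsFiberedInGroupoids {E : Type*} {C : Type*} [Category E] [Category C]
    (F : E ⥤ C) : Prop where
  lift : ∀ ⦃X Y : C⦄ (f : Y ⟶ X) (X' : E) (hX : F.obj X' = X),
    ∃ (Y' : E) (f' : Y' ⟶ X') (hY : F.obj Y' = Y),
      F.map f' = eqToHom hY ≫ f ≫ eqToHom hX.symm
  uniqueLift : ∀ ⦃Y' Z' X' : E⦄ (f' : Y' ⟶ X') (g' : Z' ⟶ X')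
    (h : F.obj Y' ⟶ F.obj Z'), h ≫ F.map g' = F.map f' →
      ∃! h' : Y' ⟶ Z', h' ≫ g' = f' ∧ F.map h' = h


section FiberSections

variable {E : Type*} {C : Type*} [Category E] [Category C] (F : E ⥤ C)

/-- An object of the fiber of `F : E ⥤ C` over `X : C`. -/
structure FiberObj (X : C) where
  obj : E
  isOver : F.obj obj = X

/-- A morphism in the fiber of `F : E ⥤ C` over `X : C`: a morphism of `E`
lying over the identity of `X`. -/
@[ext]
structure FiberHom {X : C} (a b : FiberObj F X) where
  hom : a.obj ⟶ b.obj
  isOver : F.map hom = eqToHom (a.isOver.trans b.isOver.symm)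

/-- The fiber category of `F : E ⥤ C` over `X`. -/
instance fiberCategory (X : C) : Category (FiberObj F X) where
  Hom a b := FiberHom F a b
  id a := ⟨𝟙 a.obj, by simp⟩
  comp f g := ⟨f.hom ≫ g.hom, by rw [Functor.map_comp, f.isOver, g.isOver, eqToHom_trans]⟩
  id_comp f := by apply FiberHom.ext; simp
  comp_id f := by apply FiberHom.ext; simp
  assoc f g h := by apply FiberHom.ext; simp

@[simp] lemma fiber_comp_hom {X : C} {a b c : FiberObj F X} (f : a ⟶ b) (g : b ⟶ c) :
    (f ≫ g).hom = f.hom ≫ g.hom := rfl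

@[simp] lemma fiber_id_hom {X : C} (a : FiberObj F X) : (𝟙 a : FiberHom F a a).hom = 𝟙 a.obj := rfl

/-- A section of `F : E ⥤ C` over `X : C`: a functor `C/X ⥤ E` over `C`. -/
structure SectionsObj (X : C) where
  func : Over X ⥤ E
  isOver : func ⋙ F = Over.forget X

lemma SectionsObj.obj_over {X : C} (s : SectionsObj F X) (ι : Over X) :
    F.obj (s.func.obj ι) = ι.left :=
  congrArg (fun Φ : Over X ⥤ C => Φ.obj ι) s.isOver

/-- A morphism of sections: a natural isomorphism whose components lie over
identity morphisms of `C`. -/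
@[ext]
structure SectionsHom {X : C} (s t : SectionsObj F X) where
  nat : s.func ⟶ t.func
  iso : IsIso nat
  isOver : ∀ ι : Over X, F.map (nat.app ι) =
    eqToHom ((s.obj_over F ι).trans (t.obj_over F ι).symm)

/-- The category of sections of `F : E ⥤ C` over `X`. -/
instance sectionsCategory (X : C) : Category (SectionsObj F X) where
  Hom s t := SectionsHom F s t
  id s := ⟨𝟙 s.func, inferInstance, fun ι => by simp⟩
  comp φ ψ := ⟨φ.nat ≫ ψ.nat, by have := φ.iso; have := ψ.iso; infer_instance,
    fun ι => by rw [NatTrans.comp_app, Functor.map_comp, φ.isOver, ψ.isOver, eqToHom_trans]⟩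
  id_comp φ := by apply SectionsHom.ext; simp
  comp_id φ := by apply SectionsHom.ext; simp
  assoc φ ψ χ := by apply SectionsHom.ext; simp

@[simp] lemma sections_comp_nat {X : C} {s t u : SectionsObj F X} (φ : s ⟶ t) (ψ : t ⟶ u) :
    (φ ≫ ψ).nat = φ.nat ≫ ψ.nat := rfl

@[simp] lemma sections_id_nat {X : C} (s : SectionsObj F X) :
    (𝟙 s : SectionsHom F s s).nat = 𝟙 s.func := rfl

/-- The sections form a groupoid. -/
noncomputable instance sectionsGroupoid (X : C) : Groupoid (SectionsObj F X) where
  inv {s t} φ :=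
    letI := φ.iso
    ⟨inv φ.nat, inferInstance, fun ι => by
      have happ : (inv φ.nat).app ι = inv (φ.nat.app ι) := by
        apply IsIso.eq_inv_of_hom_inv_id
        rw [← NatTrans.comp_app, IsIso.hom_inv_id, NatTrans.id_app]
      rw [happ, Functor.map_inv]
      have hov := φ.isOver ι
      apply IsIso.inv_eq_of_hom_inv_id
      rw [hov, eqToHom_trans, eqToHom_refl]⟩
  inv_comp {s t} φ := by
    apply SectionsHom.ext
    letI := φ.iso
    simp
  comp_inv {s t} φ := by
    apply SectionsHom.ext
    letI := φ.iso
    simp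

/-- Evaluation of sections at `id_X`. -/
def evalAtId (X : C) : SectionsObj F X ⥤ FiberObj F X where
  obj s := ⟨s.func.obj (Over.mk (𝟙 X)), s.obj_over F (Over.mk (𝟙 X))⟩
  map {s t} φ := ⟨φ.nat.app (Over.mk (𝟙 X)), φ.isOver (Over.mk (𝟙 X))⟩
  map_id s := by apply FiberHom.ext; simp
  map_comp φ ψ := by apply FiberHom.ext; simp

end FiberSections

section AuxProof

variable {E : Type*} {C : Type*} [Category E] [Category C] {F : E ⥤ C}

/-- In a category fibered in groupoids, any morphism lying over an `eqToHom` is an iso. -/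
lemma IsFiberedInGroupoids.isIso_over (hF : IsFiberedInGroupoids F)
    {A B : E} (u : A ⟶ B) (h : F.obj A = F.obj B) (hu : F.map u = eqToHom h) :
    IsIso u := by
  obtain ⟨v, ⟨hv1, hv2⟩, -⟩ := hF.uniqueLift (𝟙 B) u (eqToHom h.symm)
    (by rw [hu, eqToHom_trans, eqToHom_refl, F.map_id])
  refine ⟨v, ?_, hv1⟩
  obtain ⟨w, -, hw⟩ := hF.uniqueLift u u (𝟙 (F.obj A)) (by simp)
  have h1 : u ≫ v = w := hw _ ⟨by rw [Category.assoc, hv1, Category.comp_id],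
    by rw [F.map_comp, hu, hv2, eqToHom_trans, eqToHom_refl]⟩
  have h2 : 𝟙 A = w := hw _ ⟨by simp, by simp⟩
  rw [h1, ← h2]

lemma FiberObj.ext' {X : C} {a b : FiberObj F X} (h : a.obj = b.obj) : a = b := by
  cases a; cases b; cases h; rfl

lemma SectionsObj.map_over {X : C} (s : SectionsObj F X) {ι κ : Over X} (u : ι ⟶ κ) :
    F.map (s.func.map u) =
      eqToHom (s.obj_over F ι) ≫ u.left ≫ eqToHom (s.obj_over F κ).symm := by
  have := Functor.congr_hom s.isOver u
  simpa using this

/-- The data of one lift of `ι.hom` to `X'`. -/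
structure SecLift (F : E ⥤ C) (X' : E) {X : C} (hX : F.obj X' = X) (ι : Over X) where
  obj : E
  hom : obj ⟶ X'
  base : F.obj obj = ι.left
  comm : F.map hom = eqToHom base ≫ ι.hom ≫ eqToHom hX.symm

variable {X' : E} {X : C} {hX : F.obj X' = X}

lemma secMapSpec (hF : IsFiberedInGroupoids F) (L : ∀ ι : Over X, SecLift F X' hX ι)
    {ι κ : Over X} (u : ι ⟶ κ) :
    ∃! m : (L ι).obj ⟶ (L κ).obj, m ≫ (L κ).hom = (L ι).hom ∧
      F.map m = eqToHom (L ι).base ≫ u.left ≫ eqToHom (L κ).base.symm := by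
  refine hF.uniqueLift (L ι).hom (L κ).hom _ ?_
  rw [(L κ).comm, (L ι).comm]
  simp [Over.w u]

/-- The section functor built from a family of lifts. -/
noncomputable def secFunctor (hF : IsFiberedInGroupoids F)
    (L : ∀ ι : Over X, SecLift F X' hX ι) : Over X ⥤ E where
  obj ι := (L ι).obj
  map u := (secMapSpec hF L u).choose
  map_id ι := ((secMapSpec hF L (𝟙 ι)).unique (secMapSpec hF L (𝟙 ι)).choose_spec.1
    ⟨by simp, by simp⟩)
  map_comp {ι κ ρ} u v := ((secMapSpec hF L (u ≫ v)).unique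
    (secMapSpec hF L (u ≫ v)).choose_spec.1
    ⟨by rw [Category.assoc, (secMapSpec hF L v).choose_spec.1.1,
        (secMapSpec hF L u).choose_spec.1.1],
     by rw [F.map_comp, (secMapSpec hF L u).choose_spec.1.2,
        (secMapSpec hF L v).choose_spec.1.2]; simp⟩)

lemma secFunctor_over (hF : IsFiberedInGroupoids F)
    (L : ∀ ι : Over X, SecLift F X' hX ι) :
    secFunctor hF L ⋙ F = Over.forget X := by
  refine CategoryTheory.Functor.ext (fun ι => (L ι).base) (fun ι κ u => ?_)
  exact (secMapSpec hF L u).choose_spec.1.2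

/-- The canonical morphism to the terminal object of `Over X`. -/
def toTerm (ι : Over X) : ι ⟶ Over.mk (𝟙 X) := Over.homMk ι.hom (by simp)

@[simp] lemma toTerm_left (ι : Over X) : (toTerm ι).left = ι.hom := rfl

lemma toTerm_id : toTerm (Over.mk (𝟙 X)) = 𝟙 (Over.mk (𝟙 X)) := by
  apply Over.OverMorphism.ext; simp

lemma comp_toTerm {ι κ : Over X} (u : ι ⟶ κ) : u ≫ toTerm κ = toTerm ι := by
  apply Over.OverMorphism.ext; simp

lemma secTransSpec (hF : IsFiberedInGroupoids F) (s t : SectionsObj F X)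
    (f : s.func.obj (Over.mk (𝟙 X)) ⟶ t.func.obj (Over.mk (𝟙 X)))
    (hf : F.map f = eqToHom ((s.obj_over F (Over.mk (𝟙 X))).trans
      (t.obj_over F (Over.mk (𝟙 X))).symm)) (ι : Over X) :
    ∃! m : s.func.obj ι ⟶ t.func.obj ι,
      m ≫ t.func.map (toTerm ι) = s.func.map (toTerm ι) ≫ f ∧
      F.map m = eqToHom ((s.obj_over F ι).trans (t.obj_over F ι).symm) := by
  refine hF.uniqueLift (s.func.map (toTerm ι) ≫ f) (t.func.map (toTerm ι)) _ ?_
  rw [F.map_comp, s.map_over, t.map_over, hf]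
  simp

end AuxProof

/-- For a category fibered in groupoids `F : E ⥤ C` and `X : C`:
(1) every object of the fiber over `X` extends to a section `C/X ⥤ E` over `C`;
(2) a morphism between the values at `id_X` of two sections extends uniquely to a
natural isomorphism over identities between the sections;
consequently evaluation at `id_X` is an equivalence of groupoids
`Grpd(C/X, E) ⥤ E_X` which is surjective on objects. -/
theorem sections_equiv_fiber {E : Type u} {C : Type u} [Category.{u} E] [Category.{u} C]
    (F : E ⥤ C) (hF : IsFiberedInGroupoids F) (X : C) :
    (∀ (X' : E) (_ : F.obj X' = X),
      ∃ s : SectionsObj F X, s.func.obj (Over.mk (𝟙 X)) = X') ∧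
    (∀ (s t : SectionsObj F X)
      (f : s.func.obj (Over.mk (𝟙 X)) ⟶ t.func.obj (Over.mk (𝟙 X))),
      F.map f = eqToHom ((s.obj_over F (Over.mk (𝟙 X))).trans
        (t.obj_over F (Over.mk (𝟙 X))).symm) →
      ∃! φ : s ⟶ t, φ.nat.app (Over.mk (𝟙 X)) = f) ∧
    (Functor.IsEquivalence (evalAtId F X) ∧ Function.Surjective (evalAtId F X).obj) := by
  classical
  -- Part 1: existence of sections through a given fiber object
  have h1 : ∀ (X' : E) (_ : F.obj X' = X),
      ∃ s : SectionsObj F X, s.func.obj (Over.mk (𝟙 X)) = X' := by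
    intro X' hX
    have hne : ∀ ι : Over X, Nonempty (SecLift F X' hX ι) := fun ι => by
      obtain ⟨Y', f', hY, hf⟩ := hF.lift ι.hom X' hX
      exact ⟨⟨Y', f', hY, hf⟩⟩
    let L : ∀ ι : Over X, SecLift F X' hX ι :=
      Function.update (fun ι => (hne ι).some) (Over.mk (𝟙 X)) ⟨X', 𝟙 X', hX, by simp⟩
    refine ⟨⟨secFunctor hF L, secFunctor_over hF L⟩, ?_⟩
    show (L (Over.mk (𝟙 X))).obj = X'
    rw [show L (Over.mk (𝟙 X)) = ⟨X', 𝟙 X', hX, by simp⟩ from Function.update_self _ _ _]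
  -- Part 2: unique extension of fiber morphisms to morphisms of sections
  have h2 : ∀ (s t : SectionsObj F X)
      (f : s.func.obj (Over.mk (𝟙 X)) ⟶ t.func.obj (Over.mk (𝟙 X))),
      F.map f = eqToHom ((s.obj_over F (Over.mk (𝟙 X))).trans
        (t.obj_over F (Over.mk (𝟙 X))).symm) →
      ∃! φ : s ⟶ t, φ.nat.app (Over.mk (𝟙 X)) = f := by
    intro s t f hf
    have spec := secTransSpec hF s t f hf
    let a : ∀ ι : Over X, s.func.obj ι ⟶ t.func.obj ι := fun ι => (spec ι).choose
    have hap := fun ι => (spec ι).choose_spec.1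
    have hau := fun ι => (spec ι).choose_spec.2
    have hnat : ∀ {ι κ : Over X} (u : ι ⟶ κ),
        s.func.map u ≫ a κ = a ι ≫ t.func.map u := by
      intro ι κ u
      have hcomm : (eqToHom (s.obj_over F ι) ≫ u.left ≫ eqToHom (t.obj_over F κ).symm) ≫
          F.map (t.func.map (toTerm κ)) = F.map (s.func.map (toTerm ι) ≫ f) := by
        rw [F.map_comp, s.map_over, t.map_over, hf]
        simp only [toTerm_left, Category.assoc, eqToHom_trans, eqToHom_trans_assoc,
          eqToHom_refl, Category.comp_id, Category.id_comp]
        rw [← Over.w u]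
        simp
      obtain ⟨m, -, hm⟩ := hF.uniqueLift (s.func.map (toTerm ι) ≫ f)
        (t.func.map (toTerm κ))
        (eqToHom (s.obj_over F ι) ≫ u.left ≫ eqToHom (t.obj_over F κ).symm) hcomm
      have e1 : s.func.map u ≫ a κ = m := by
        refine hm _ ⟨?_, ?_⟩
        · rw [Category.assoc, (hap κ).1, ← Category.assoc, ← s.func.map_comp, comp_toTerm]
        · rw [F.map_comp, s.map_over, (hap κ).2]; simp
      have e2 : a ι ≫ t.func.map u = m := by
        refine hm _ ⟨?_, ?_⟩
        · rw [Category.assoc, ← t.func.map_comp, comp_toTerm, (hap ι).1]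
        · rw [F.map_comp, t.map_over, (hap ι).2]; simp
      rw [e1, ← e2]
    have hiso : ∀ ι : Over X, IsIso (a ι) := fun ι =>
      hF.isIso_over (a ι) _ (hap ι).2
    let φ : s ⟶ t :=
      { nat := { app := a, naturality := fun ι κ u => hnat u }
        iso := by
          haveI := hiso
          exact NatIso.isIso_of_isIso_app _
        isOver := fun ι => (hap ι).2 }
    have happ : ∀ (ψ : s ⟶ t), ψ.nat.app (Over.mk (𝟙 X)) = f → ∀ ι, ψ.nat.app ι = a ι := by
      intro ψ hψ ι
      refine (spec ι).unique ⟨?_, ψ.isOver ι⟩ (hap ι)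
      rw [← ψ.nat.naturality (toTerm ι), hψ]
    refine ⟨φ, ?_, ?_⟩
    · show a (Over.mk (𝟙 X)) = f
      refine (spec (Over.mk (𝟙 X))).unique (hap _) ⟨?_, hf⟩
      rw [toTerm_id]; simp
    · intro ψ hψ
      apply SectionsHom.ext
      apply NatTrans.ext
      funext ι
      exact happ ψ hψ ι
  -- Part 3: equivalence and surjectivity
  haveI hfaith : (evalAtId F X).Faithful := by
    refine ⟨fun {s t} φ ψ h => ?_⟩
    have hφψ : φ.nat.app (Over.mk (𝟙 X)) = ψ.nat.app (Over.mk (𝟙 X)) :=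
      congrArg FiberHom.hom h
    obtain ⟨χ, -, huniq⟩ := h2 s t (ψ.nat.app (Over.mk (𝟙 X))) (ψ.isOver _)
    rw [huniq φ hφψ, huniq ψ rfl]
  haveI hfull : (evalAtId F X).Full := by
    refine ⟨fun {s t} g => ?_⟩
    obtain ⟨φ, hφ, -⟩ := h2 s t g.hom g.isOver
    exact ⟨φ, FiberHom.ext hφ⟩
  have hsurj : Function.Surjective (evalAtId F X).obj := by
    intro b
    obtain ⟨s, hs⟩ := h1 b.obj b.isOver
    exact ⟨s, FiberObj.ext' hs⟩
  haveI hess : (evalAtId F X).EssSurj := ⟨fun b => ⟨(hsurj b).choose, ⟨eqToIso (hsurj b).choose_spec⟩⟩⟩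
  exact ⟨h1, h2, ⟨hfaith, hfull, hess⟩, hsurj⟩
end

section
/- A functor F : E → C between small categories is a category fibered in groupoids if and only if for every object X' of E the induced functor on slice categories E/X' → C/F(X') is an equivalence of categories that is surjective on objects. -/
open CategoryTheory

universe u v

/-- A functor between small categories is a category fibered in groupoids if and only
if all the induced functors on slice categories `E/X' ⥤ C/F(X')` are equivalences of
categories which are surjective on objects. -/
theorem isFiberedInGroupoids_iff_slice_equivalences
    {E C : Type u} [Category.{u} E] [Category.{u} C] (F : E ⥤ C) :
    IsFiberedInGroupoids F ↔
      ∀ X' : E, Functor.IsEquivalence (Over.post F (X := X')) ∧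
        Function.Surjective (Over.post F (X := X')).obj := by
  constructor
  · intro hF X'
    have surj : Function.Surjective (Over.post F (X := X')).obj := by
      rintro ⟨Y, ⟨⟨⟩⟩, f⟩
      obtain ⟨Y', f', hY, hmap⟩ := hF.lift f X' rfl
      refine ⟨Over.mk f', ?_⟩
      cases hY
      simp only [eqToHom_refl, Category.comp_id, Category.id_comp] at hmap
      simp [hmap]; rfl
    have faithful : (Over.post F (X := X')).Faithful := by
      constructor
      intro A B m₁ m₂ hm
      obtain ⟨h', hh', huniq⟩ := hF.uniqueLift A.hom B.hom (F.map m₁.left)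
        (by rw [← F.map_comp, Over.w])
      have e1 := huniq m₁.left ⟨Over.w m₁, rfl⟩
      have e2 := huniq m₂.left ⟨Over.w m₂, by
        have := congrArg CommaMorphism.left hm
        exact this.symm⟩
      ext
      rw [e1, e2]
    have full : (Over.post F (X := X')).Full := by
      constructor
      intro A B m
      obtain ⟨h', ⟨hc, hm⟩, _⟩ := hF.uniqueLift A.hom B.hom m.left
        (by exact Over.w m)
      exact ⟨Over.homMk h' hc, by ext; simpa⟩
    exact ⟨⟨faithful, full, ⟨fun Y => ⟨(surj Y).choose, ⟨eqToIso (surj Y).choose_spec⟩⟩⟩⟩, surj⟩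
  · intro h
    constructor
    · intro X Y f X' hX
      subst hX
      obtain ⟨A, hA⟩ := (h X').2 (Over.mk f)
      have hY : F.obj A.left = Y := congrArg Comma.left hA
      refine ⟨A.left, A.hom, hY, ?_⟩
      have hw := Over.w (eqToHom hA)
      simp only [Over.post_obj, Over.mk_hom, Over.eqToHom_left] at hw
      simp only [eqToHom_refl, Category.comp_id]
      exact hw.symm
    · intro Y' Z' X' f' g' hmor hcomm
      have hfull := ((h X').1).full
      have hfai := ((h X').1).faithful
      let m : (Over.post F (X := X')).obj (Over.mk f') ⟶
          (Over.post F (X := X')).obj (Over.mk g') :=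
        Over.homMk hmor (by exact hcomm)
      obtain ⟨n, hn⟩ := hfull.map_surjective m
      refine ⟨n.left, ⟨Over.w n, ?_⟩, ?_⟩
      · have := congrArg CommaMorphism.left hn
        exact this
      · rintro k ⟨hk1, hk2⟩
        have : Over.homMk k hk1 = n := hfai.map_injective (by
          rw [hn]; ext; exact hk2)
        rw [← this]
        rfl
end

section
/- Let C be a small category with pullbacks equipped with a Grothendieck pretopology and let φ : F → G be a map of presheaves of groupoids on C. Then φ induces an isomorphism on sheaves of homotopy groups if and only if φ satisfies the local lifting conditions (L1), (L2), (L3). -/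
set_option linter.unusedSectionVars false

open CategoryTheory Opposite Limits

universe u

variable {C : Type u} [Category.{u} C] [HasPullbacks C]

section Pi0Aut

variable {F G : Cᵒᵖ ⥤ Grpd.{u, u}}

lemma grpd_map_obj_id (F : Cᵒᵖ ⥤ Grpd.{u, u}) (X : Cᵒᵖ) (a : F.obj X) :
    (F.map (𝟙 X)).obj a = a := by rw [F.map_id]; rfl

lemma grpd_map_obj_comp (F : Cᵒᵖ ⥤ Grpd.{u, u}) {X Y Z : Cᵒᵖ} (g : X ⟶ Y) (h : Y ⟶ Z)
    (a : F.obj X) : (F.map (g ≫ h)).obj a = (F.map h).obj ((F.map g).obj a) := by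
  rw [F.map_comp]; rfl

lemma res_res (F : Cᵒᵖ ⥤ Grpd.{u, u}) {V W T : C} (g : V ⟶ W) (h : W ⟶ T)
    (x : F.obj (op T)) :
    (F.map g.op).obj ((F.map h.op).obj x) = (F.map (g ≫ h).op).obj x := by
  rw [op_comp, F.map_comp]; rfl

lemma nat_obj_eq (φ : F ⟶ G) {X Y : C} (h : Y ⟶ X) (a : F.obj (op X)) :
    (φ.app (op Y)).obj ((F.map h.op).obj a) = (G.map h.op).obj ((φ.app (op X)).obj a) :=
  congrArg (fun Φ : ↑(F.obj (op X)) ⥤ ↑(G.obj (op Y)) => Φ.obj a) (φ.naturality h.op)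

/-- The presheaf `π₀F` of isomorphism classes of a presheaf of groupoids. -/
def pi0 (F : Cᵒᵖ ⥤ Grpd.{u, u}) : Cᵒᵖ ⥤ Type u where
  obj X := Quot (fun a b : F.obj X => Nonempty (a ≅ b))
  map {X Y} g := TypeCat.ofHom (Quot.map (F.map g).obj
    (fun a b e => e.elim fun e => ⟨(F.map g).mapIso e⟩))
  map_id X := by
    ext q
    obtain ⟨a⟩ := q
    exact congrArg (Quot.mk _) (grpd_map_obj_id F X a)
  map_comp {X Y Z} g h := by
    ext q
    obtain ⟨a⟩ := q
    exact congrArg (Quot.mk _) (grpd_map_obj_comp F g h a)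

/-- The map induced on `π₀` by a map of presheaves of groupoids. -/
def pi0Map (φ : F ⟶ G) : pi0 F ⟶ pi0 G where
  app X := TypeCat.ofHom (Quot.map (φ.app X).obj
    (fun a b e => e.elim fun e => ⟨(φ.app X).mapIso e⟩))
  naturality X Y g := by
    ext q
    obtain ⟨a⟩ := q
    exact congrArg (Quot.mk _)
      (congrArg (fun Φ : ↑(F.obj X) ⥤ ↑(G.obj Y) => Φ.obj a) (φ.naturality g))

lemma aut_eq (F : Cᵒᵖ ⥤ Grpd.{u, u}) {X : C} (a : F.obj (op X)) {g g' : (Over X)ᵒᵖ}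
    (h : g ⟶ g') :
    (F.map g'.unop.hom.op).obj a =
      (F.map h.unop.left.op).obj ((F.map g.unop.hom.op).obj a) := by
  rw [res_res, Over.w h.unop]

/-- The presheaf of automorphism groups `Aut_F(a)` on `C/X`, for `a ∈ F(X)` (in a
groupoid, the endomorphisms of an object are exactly its automorphisms). -/
def autPre (F : Cᵒᵖ ⥤ Grpd.{u, u}) (X : C) (a : F.obj (op X)) : (Over X)ᵒᵖ ⥤ Type u where
  obj g := ((F.map g.unop.hom.op).obj a ⟶ (F.map g.unop.hom.op).obj a)
  map {g g'} h := TypeCat.ofHom fun e =>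
    eqToHom (aut_eq F a h) ≫ (F.map h.unop.left.op).map e ≫ eqToHom (aut_eq F a h).symm
  map_id := by
    intro g
    ext e
    have h : (𝟙 g : g ⟶ g).unop.left = 𝟙 g.unop.left := rfl
    have h2 := Functor.congr_hom (show F.map ((𝟙 g : g ⟶ g).unop.left.op) = 𝟙 _ by
      rw [h, op_id, F.map_id]) e
    show eqToHom _ ≫ (F.map (𝟙 g : g ⟶ g).unop.left.op).map e ≫ eqToHom _ = e
    simp only [h2, eqToHom_trans]
    simp only [show ((𝟙 (F.obj (op g.unop.left)) : _ ⟶ _)).map e = e from rfl]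
    simp
  map_comp := by
    intro g g' g'' h h'
    ext e
    have h2 := Functor.congr_hom (show F.map ((h ≫ h').unop.left.op)
        = F.map h.unop.left.op ≫ F.map h'.unop.left.op by
      rw [show (h ≫ h').unop.left = h'.unop.left ≫ h.unop.left from rfl, op_comp,
        F.map_comp]) e
    show eqToHom _ ≫ (F.map (h ≫ h').unop.left.op).map e ≫ eqToHom _ =
      eqToHom _ ≫ (F.map h'.unop.left.op).map
        (eqToHom _ ≫ (F.map h.unop.left.op).map e ≫ eqToHom _) ≫ eqToHom _
    simp only [types_comp_apply, h2]
    rw [show ∀ {A B : ↑(F.obj (op g.unop.left))} (x : A ⟶ B),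
        ((F.map h.unop.left.op ≫ F.map h'.unop.left.op)).map x
        = (F.map h'.unop.left.op).map ((F.map h.unop.left.op).map x) from fun _ => rfl]
    simp [eqToHom_map]

/-- The map induced by `φ : F ⟶ G` on automorphism presheaves. -/
def autMap (φ : F ⟶ G) (X : C) (a : F.obj (op X)) :
    autPre F X a ⟶ autPre G X ((φ.app (op X)).obj a) where
  app g := TypeCat.ofHom fun e =>
    eqToHom (nat_obj_eq φ g.unop.hom a).symm ≫ (φ.app (op g.unop.left)).map e ≫
      eqToHom (nat_obj_eq φ g.unop.hom a)
  naturality := by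
    intro g g' h
    ext (e : (F.map g.unop.hom.op).obj a ⟶ (F.map g.unop.hom.op).obj a)
    have h2 := Functor.congr_hom (φ.naturality h.unop.left.op) e
    show eqToHom _ ≫ (φ.app (op g'.unop.left)).map
        (eqToHom _ ≫ (F.map h.unop.left.op).map e ≫ eqToHom _) ≫ eqToHom _ =
      eqToHom _ ≫ (G.map h.unop.left.op).map
        (eqToHom _ ≫ (φ.app (op g.unop.left)).map e ≫ eqToHom _) ≫ eqToHom _
    rw [show ∀ {A B : ↑(F.obj (op g.unop.left))} (x : A ⟶ B),
        ((F.map h.unop.left.op ≫ φ.app (op g'.unop.left))).map x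
        = (φ.app (op g'.unop.left)).map ((F.map h.unop.left.op).map x) from fun _ => rfl] at h2
    rw [show ∀ {A B : ↑(F.obj (op g.unop.left))} (x : A ⟶ B),
        ((φ.app (op g.unop.left) ≫ G.map h.unop.left.op)).map x
        = (G.map h.unop.left.op).map ((φ.app (op g.unop.left)).map x) from fun _ => rfl] at h2
    simp [h2, eqToHom_map]

variable (K : Pretopology C)

/-- A map of presheaves of groupoids induces an isomorphism on sheaves of homotopy
groups if the sheafification of `π₀φ` is an isomorphism and, for every `X` and every
object `a` of `F(X)`, the sheafification of `Aut_F(a) ⟶ Aut_G(φ(a))` is an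
isomorphism of sheaves on `C/X`. -/
def InducesIsoOnHomotopySheaves (φ : F ⟶ G) : Prop :=
  IsIso ((presheafToSheaf (K.toGrothendieck) (Type u)).map (pi0Map φ)) ∧
  ∀ (X : C) (a : F.obj (op X)),
    IsIso ((presheafToSheaf ((K.toGrothendieck).over X) (Type u)).map (autMap φ X a))

/-- The local lifting conditions (L1), (L2), (L3) for a map of presheaves of
groupoids. -/
structure LocalLiftingConditions (φ : F ⟶ G) : Prop where
  obj_lift : ∀ (X : C) (b : G.obj (op X)),
    ∃ (ι : Type u) (V : ι → C) (g : ∀ i, V i ⟶ X),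
      Presieve.ofArrows V g ∈ K.coverings X ∧
      ∀ i, ∃ a : F.obj (op (V i)),
        Nonempty ((φ.app (op (V i))).obj a ≅ (G.map (g i).op).obj b)
  hom_lift : ∀ (X : C) (a a' : F.obj (op X))
    (k : (φ.app (op X)).obj a ⟶ (φ.app (op X)).obj a'),
    ∃ (ι : Type u) (V : ι → C) (g : ∀ i, V i ⟶ X),
      Presieve.ofArrows V g ∈ K.coverings X ∧
      ∀ i, ∃ h : (F.map (g i).op).obj a ⟶ (F.map (g i).op).obj a',
        (φ.app (op (V i))).map h =
          eqToHom (nat_obj_eq φ (g i) a) ≫ (G.map (g i).op).map k ≫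
            eqToHom (nat_obj_eq φ (g i) a').symm
  hom_sep : ∀ (X : C) (a : F.obj (op X)) (h : a ⟶ a),
    (φ.app (op X)).map h = 𝟙 ((φ.app (op X)).obj a) →
    ∃ (ι : Type u) (V : ι → C) (g : ∀ i, V i ⟶ X),
      Presieve.ofArrows V g ∈ K.coverings X ∧
      ∀ i, (F.map (g i).op).map h = 𝟙 ((F.map (g i).op).obj a)

end Pi0Aut

section MainProof

variable {C : Type u} [Category.{u} C] [HasPullbacks C]
variable {F G : Cᵒᵖ ⥤ Grpd.{u, u}}

lemma pi0_rel_equivalence (F : Cᵒᵖ ⥤ Grpd.{u, u}) (X : Cᵒᵖ) :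
    Equivalence (fun a b : F.obj X => Nonempty (a ≅ b)) :=
  ⟨fun a => ⟨Iso.refl a⟩, fun ⟨e⟩ => ⟨e.symm⟩, fun ⟨e⟩ ⟨f⟩ => ⟨e ≪≫ f⟩⟩

lemma pi0_mk_eq_iff {X : Cᵒᵖ} (a b : F.obj X) :
    (Quot.mk (fun a b : F.obj X => Nonempty (a ≅ b)) a
      = Quot.mk (fun a b : F.obj X => Nonempty (a ≅ b)) b) ↔ Nonempty (a ≅ b) :=
  ⟨fun h => (pi0_rel_equivalence F X).eqvGen_iff.1 (Quot.eq.1 h), fun h => Quot.sound h⟩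

lemma family_to_sieve (K : Pretopology C) {X : C} (S : Sieve X)
    (ι : Type u) (V : ι → C) (g : ∀ i, V i ⟶ X)
    (hg : Presieve.ofArrows V g ∈ K.coverings X) (h : ∀ i, S (g i)) :
    S ∈ K.toGrothendieck X := by
  rw [Pretopology.mem_toGrothendieck]
  exact ⟨_, hg, fun Y f hf => by rcases hf with ⟨i⟩; exact h i⟩

lemma sieve_to_family (K : Pretopology C) {X : C} (S : Sieve X)
    (hS : S ∈ K.toGrothendieck X) :
    ∃ (ι : Type u) (V : ι → C) (g : ∀ i, V i ⟶ X),
      Presieve.ofArrows V g ∈ K.coverings X ∧ ∀ i, S (g i) := by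
  rw [Pretopology.mem_toGrothendieck] at hS
  obtain ⟨R, hR, hRS⟩ := hS
  refine ⟨Σ (Y : C), {f : Y ⟶ X // R f}, fun p => p.1, fun p => p.2.1, ?_, fun p => hRS _ p.2.1 p.2.2⟩
  have : Presieve.ofArrows (fun p : Σ (Y : C), {f : Y ⟶ X // R f} => p.1)
      (fun p => p.2.1) = R := by
    funext Y
    ext f
    exact ⟨fun hf => by rcases hf with ⟨p⟩; exact p.2.2,
      fun hf => Presieve.ofArrows.mk (⟨Y, f, hf⟩ : Σ (Y : C), {f : Y ⟶ X // R f})⟩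
  rw [this]; exact hR

lemma autPre_map_eq_iff {X : C} (a : F.obj (op X)) {V U : Over X} (m : V ⟶ U)
    (x y : (autPre F X a).obj (op U)) :
    (autPre F X a).map m.op x = (autPre F X a).map m.op y ↔
      (F.map m.left.op).map x = (F.map m.left.op).map y := by
  simp only [autPre, Quiver.Hom.unop_op]
  constructor
  · intro h
    exact (cancel_mono _).1 ((cancel_epi _).1 h)
  · intro h
    exact congrArg (fun z => eqToHom (aut_eq F a m.op) ≫ z ≫ eqToHom (aut_eq F a m.op).symm) h

/-- The clean form of the local surjectivity condition on automorphism presheaves. -/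
def AutSurjCond (K : Pretopology C) (φ : F ⟶ G) : Prop :=
  ∀ (Y : C) (aY : F.obj (op Y)) (u : (φ.app (op Y)).obj aY ⟶ (φ.app (op Y)).obj aY),
    ∃ S : Sieve Y, S ∈ K.toGrothendieck Y ∧ ∀ {Z : C} (g : Z ⟶ Y), S g →
      ∃ w : (F.map g.op).obj aY ⟶ (F.map g.op).obj aY,
        (φ.app (op Z)).map w =
          eqToHom (nat_obj_eq φ g aY) ≫ (G.map g.op).map u ≫ eqToHom (nat_obj_eq φ g aY).symm

/-- The sieve of arrows along which a morphism `k : φ(a) ⟶ φ(a')` lifts. -/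
def liftSieve (φ : F ⟶ G) {X : C} (a a' : F.obj (op X))
    (k : (φ.app (op X)).obj a ⟶ (φ.app (op X)).obj a') : Sieve X where
  arrows Y f := ∃ h : (F.map f.op).obj a ⟶ (F.map f.op).obj a',
    (φ.app (op Y)).map h = eqToHom (nat_obj_eq φ f a) ≫ (G.map f.op).map k ≫
      eqToHom (nat_obj_eq φ f a').symm
  downward_closed := by
    rintro Y Z f ⟨h, hh⟩ g
    refine ⟨eqToHom (res_res F g f a).symm ≫ (F.map g.op).map h ≫ eqToHom (res_res F g f a'), ?_⟩
    have hnat := Functor.congr_hom (φ.naturality g.op) h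
    rw [show ∀ {A B : ↑(F.obj (op Y))} (x : A ⟶ B),
        ((F.map g.op ≫ φ.app (op Z))).map x
        = (φ.app (op Z)).map ((F.map g.op).map x) from fun _ => rfl] at hnat
    rw [show ∀ {A B : ↑(F.obj (op Y))} (x : A ⟶ B),
        ((φ.app (op Y) ≫ G.map g.op)).map x
        = (G.map g.op).map ((φ.app (op Y)).map x) from fun _ => rfl] at hnat
    have hGG := Functor.congr_hom (show G.map (g ≫ f).op = G.map f.op ≫ G.map g.op by
      rw [op_comp, G.map_comp]) k
    rw [show ∀ {A B : ↑(G.obj (op X))} (x : A ⟶ B),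
        ((G.map f.op ≫ G.map g.op)).map x
        = (G.map g.op).map ((G.map f.op).map x) from fun _ => rfl] at hGG
    simp only [Functor.map_comp, eqToHom_map, hnat, hh, hGG, Category.assoc,
      eqToHom_trans, eqToHom_trans_assoc, eqToHom_refl, Category.comp_id, Category.id_comp]

lemma eqToHom_chain_aux {D : Type*} [Category D] {A B B' E H I J : D} (p : A = B) (q : B = B')
    (m : B' ⟶ E) (r : E = H) (s : H = I) (t : I = J) (p' : A = B') (t' : E = J) :
    eqToHom p ≫ ((eqToHom q ≫ m ≫ eqToHom r) ≫ eqToHom s) ≫ eqToHom t =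
      eqToHom p' ≫ m ≫ eqToHom t' := by
  subst p q r s t
  simp

lemma autSurjCond_of_autSurj (K : Pretopology C) (φ : F ⟶ G)
    (H : ∀ (X : C) (a : F.obj (op X)),
      Presheaf.IsLocallySurjective ((K.toGrothendieck).over X) (autMap φ X a)) :
    AutSurjCond K φ := by
  intro Y aY u
  haveI := H Y aY
  have q : (G.map (𝟙 Y).op).obj ((φ.app (op Y)).obj aY) = (φ.app (op Y)).obj aY := by
    rw [op_id]; exact grpd_map_obj_id G (op Y) _
  have hmem := Presheaf.imageSieve_mem ((K.toGrothendieck).over Y) (autMap φ Y aY)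
    (eqToHom q ≫ u ≫ eqToHom q.symm :
      (autPre G Y ((φ.app (op Y)).obj aY)).obj (op (Over.mk (𝟙 Y))))
  rw [GrothendieckTopology.mem_over_iff] at hmem
  refine ⟨_, hmem, ?_⟩
  intro Z g hg
  rw [Sieve.overEquiv_iff] at hg
  obtain ⟨(t : (F.map (g ≫ 𝟙 Y).op).obj aY ⟶ (F.map (g ≫ 𝟙 Y).op).obj aY), ht⟩ := hg
  have p : (F.map (g ≫ 𝟙 Y).op).obj aY = (F.map g.op).obj aY := by rw [Category.comp_id]
  refine ⟨eqToHom p.symm ≫ t ≫ eqToHom p, ?_⟩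
  have ht' : eqToHom (nat_obj_eq φ (g ≫ 𝟙 Y) aY).symm ≫ (φ.app (op Z)).map t ≫
        eqToHom (nat_obj_eq φ (g ≫ 𝟙 Y) aY)
      = eqToHom (aut_eq G ((φ.app (op Y)).obj aY)
            ((Over.homMk g rfl : Over.mk (g ≫ 𝟙 Y) ⟶ Over.mk (𝟙 Y))).op) ≫
          (G.map g.op).map (eqToHom q ≫ u ≫ eqToHom q.symm) ≫
          eqToHom (aut_eq G ((φ.app (op Y)).obj aY)
            ((Over.homMk g rfl : Over.mk (g ≫ 𝟙 Y) ⟶ Over.mk (𝟙 Y))).op).symm := ht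
  replace ht' := (comp_eqToHom_iff _ _ _).1 ((eqToHom_comp_iff _ _ _).1 ht')
  simp only [Functor.map_comp, eqToHom_map, ht']
  simp only [autPre, TypeCat.ofHom_apply, Quiver.Hom.unop_op, Over.homMk_left, Functor.map_comp, eqToHom_map,
    Category.assoc, eqToHom_trans, eqToHom_trans_assoc, eqToHom_refl, Category.comp_id,
    Category.id_comp]
  exact eqToHom_chain_aux _ _ _ _ _ _ _ _

lemma pi0Surj_of_L1 (K : Pretopology C) (φ : F ⟶ G) (h : LocalLiftingConditions K φ) :
    Presheaf.IsLocallySurjective (K.toGrothendieck) (pi0Map φ) := by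
  refine ⟨fun {X} s => ?_⟩
  obtain ⟨b, rfl⟩ := Quot.exists_rep s
  obtain ⟨ι, V, g, hg, hb⟩ := h.obj_lift X b
  refine family_to_sieve K _ ι V g hg (fun i => ?_)
  obtain ⟨a, ⟨e⟩⟩ := hb i
  exact ⟨Quot.mk _ a, Quot.sound ⟨e⟩⟩

lemma pi0Inj_of_L2 (K : Pretopology C) (φ : F ⟶ G) (h : LocalLiftingConditions K φ) :
    Presheaf.IsLocallyInjective (K.toGrothendieck) (pi0Map φ) := by
  refine ⟨fun {X} x y hxy => ?_⟩
  obtain ⟨a, rfl⟩ := Quot.exists_rep x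
  obtain ⟨a', rfl⟩ := Quot.exists_rep y
  obtain ⟨e⟩ := (pi0_mk_eq_iff _ _).1 hxy
  obtain ⟨ι, V, g, hg, hh⟩ := h.hom_lift X.unop a a' e.hom
  refine family_to_sieve K _ ι V g hg (fun i => ?_)
  obtain ⟨w, _⟩ := hh i
  exact Quot.sound ⟨(Groupoid.isoEquivHom _ _).symm w⟩

lemma autSurj_of_L2 (K : Pretopology C) (φ : F ⟶ G) (h : LocalLiftingConditions K φ)
    (X : C) (a : F.obj (op X)) :
    Presheaf.IsLocallySurjective ((K.toGrothendieck).over X) (autMap φ X a) := by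
  refine ⟨fun {U} (s : (G.map U.hom.op).obj ((φ.app (op X)).obj a) ⟶
    (G.map U.hom.op).obj ((φ.app (op X)).obj a)) => ?_⟩
  obtain ⟨ι, V, g, hg, hws⟩ := h.hom_lift U.left ((F.map U.hom.op).obj a)
    ((F.map U.hom.op).obj a)
    (eqToHom (nat_obj_eq φ U.hom a) ≫ s ≫ eqToHom (nat_obj_eq φ U.hom a).symm)
  rw [GrothendieckTopology.mem_over_iff]
  refine family_to_sieve K _ ι V g hg (fun i => ?_)
  rw [Sieve.overEquiv_iff]
  obtain ⟨w, hw⟩ := hws i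
  refine ⟨eqToHom (res_res F (g i) U.hom a).symm ≫ w ≫ eqToHom (res_res F (g i) U.hom a), ?_⟩
  show eqToHom (nat_obj_eq φ ((Over.mk (g i ≫ U.hom)).hom) a).symm ≫
      (φ.app (op (V i))).map _ ≫ eqToHom (nat_obj_eq φ ((Over.mk (g i ≫ U.hom)).hom) a)
    = (autPre G X ((φ.app (op X)).obj a)).map
        ((Over.homMk (g i) rfl : Over.mk (g i ≫ U.hom) ⟶ U)).op s
  simp only [Functor.map_comp, eqToHom_map, hw]
  simp only [autPre, TypeCat.ofHom_apply, Quiver.Hom.unop_op, Over.homMk_left, Functor.map_comp, eqToHom_map,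
    Category.assoc, eqToHom_trans, eqToHom_trans_assoc, eqToHom_refl, Category.comp_id,
    Category.id_comp]
  rfl

lemma autInj_of_L3 (K : Pretopology C) (φ : F ⟶ G) (h : LocalLiftingConditions K φ)
    (X : C) (a : F.obj (op X)) :
    Presheaf.IsLocallyInjective ((K.toGrothendieck).over X) (autMap φ X a) := by
  refine ⟨fun {U} (x : (F.map U.unop.hom.op).obj a ⟶ (F.map U.unop.hom.op).obj a)
    (y : (F.map U.unop.hom.op).obj a ⟶ (F.map U.unop.hom.op).obj a) hxy => ?_⟩
  have hxy' : eqToHom (nat_obj_eq φ U.unop.hom a).symm ≫ (φ.app (op U.unop.left)).map x ≫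
        eqToHom (nat_obj_eq φ U.unop.hom a)
      = eqToHom (nat_obj_eq φ U.unop.hom a).symm ≫ (φ.app (op U.unop.left)).map y ≫
        eqToHom (nat_obj_eq φ U.unop.hom a) := hxy
  have hφ : (φ.app (op U.unop.left)).map x = (φ.app (op U.unop.left)).map y := by
    have h2 := (cancel_epi (eqToHom (nat_obj_eq φ U.unop.hom a).symm)).1 hxy'
    exact (cancel_mono (eqToHom (nat_obj_eq φ U.unop.hom a))).1 h2
  have hid : (φ.app (op U.unop.left)).map (x ≫ Groupoid.inv y)
      = 𝟙 ((φ.app (op U.unop.left)).obj ((F.map U.unop.hom.op).obj a)) := by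
    rw [Functor.map_comp, hφ, Groupoid.inv_eq_inv, Functor.map_inv, IsIso.hom_inv_id]
  obtain ⟨ι, V, g, hg, hS⟩ := h.hom_sep U.unop.left _ (x ≫ Groupoid.inv y) hid
  rw [GrothendieckTopology.mem_over_iff]
  refine family_to_sieve K _ ι V g hg (fun i => ?_)
  have hxy2 : (F.map (g i).op).map x = (F.map (g i).op).map y := by
    have h3 := hS i
    rw [Functor.map_comp, Groupoid.inv_eq_inv, Functor.map_inv] at h3
    rw [IsIso.comp_inv_eq] at h3
    simpa using h3
  rw [Sieve.overEquiv_iff]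
  exact (autPre_map_eq_iff a
    ((Over.homMk (g i) rfl : Over.mk (g i ≫ U.unop.hom) ⟶ U.unop)) x y).2 hxy2

lemma L1_of_pi0Surj (K : Pretopology C) (φ : F ⟶ G)
    (H : Presheaf.IsLocallySurjective (K.toGrothendieck) (pi0Map φ))
    (X : C) (b : G.obj (op X)) :
    ∃ (ι : Type u) (V : ι → C) (g : ∀ i, V i ⟶ X),
      Presieve.ofArrows V g ∈ K.coverings X ∧
      ∀ i, ∃ a : F.obj (op (V i)),
        Nonempty ((φ.app (op (V i))).obj a ≅ (G.map (g i).op).obj b) := by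
  have hs := Presheaf.imageSieve_mem (K.toGrothendieck) (pi0Map φ)
    (Quot.mk _ b : (pi0 G).obj (op X))
  obtain ⟨ι, V, g, hg, hS⟩ := sieve_to_family K _ hs
  refine ⟨ι, V, g, hg, fun i => ?_⟩
  obtain ⟨t, ht⟩ := hS i
  obtain ⟨a, rfl⟩ := Quot.exists_rep t
  exact ⟨a, (pi0_mk_eq_iff _ _).1 ht⟩

lemma L2_of (K : Pretopology C) (φ : F ⟶ G)
    (H0 : Presheaf.IsLocallyInjective (K.toGrothendieck) (pi0Map φ))
    (HA : AutSurjCond K φ)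
    (X : C) (a a' : F.obj (op X))
    (k : (φ.app (op X)).obj a ⟶ (φ.app (op X)).obj a') :
    ∃ (ι : Type u) (V : ι → C) (g : ∀ i, V i ⟶ X),
      Presieve.ofArrows V g ∈ K.coverings X ∧
      ∀ i, ∃ h : (F.map (g i).op).obj a ⟶ (F.map (g i).op).obj a',
        (φ.app (op (V i))).map h =
          eqToHom (nat_obj_eq φ (g i) a) ≫ (G.map (g i).op).map k ≫
            eqToHom (nat_obj_eq φ (g i) a').symm := by
  have hpi : (pi0Map φ).app (op X) (Quot.mk _ a) = (pi0Map φ).app (op X) (Quot.mk _ a') :=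
    Quot.sound ⟨(Groupoid.isoEquivHom _ _).symm k⟩
  have heq := Presheaf.equalizerSieve_mem (K.toGrothendieck) (pi0Map φ)
    (Quot.mk _ a : (pi0 F).obj (op X)) (Quot.mk _ a') hpi
  have hS : liftSieve φ a a' k ∈ K.toGrothendieck X := by
    refine GrothendieckTopology.transitive _ heq _ ?_
    intro Y f hf
    obtain ⟨e⟩ := (pi0_mk_eq_iff ((F.map f.op).obj a) ((F.map f.op).obj a')).1 hf
    obtain ⟨T, hT, hTw⟩ := HA Y ((F.map f.op).obj a)
      ((eqToHom (nat_obj_eq φ f a) ≫ (G.map f.op).map k ≫ eqToHom (nat_obj_eq φ f a').symm) ≫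
        inv ((φ.app (op Y)).map e.hom))
    refine GrothendieckTopology.superset_covering _ ?_ hT
    intro Z g hg
    obtain ⟨w, hw⟩ := hTw g hg
    refine ⟨eqToHom (res_res F g f a).symm ≫ (w ≫ (F.map g.op).map e.hom) ≫
      eqToHom (res_res F g f a'), ?_⟩
    have hnat := Functor.congr_hom (φ.naturality g.op) e.hom
    rw [show ∀ {A B : ↑(F.obj (op Y))} (x : A ⟶ B),
        ((F.map g.op ≫ φ.app (op Z))).map x
        = (φ.app (op Z)).map ((F.map g.op).map x) from fun _ => rfl] at hnat
    rw [show ∀ {A B : ↑(F.obj (op Y))} (x : A ⟶ B),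
        ((φ.app (op Y) ≫ G.map g.op)).map x
        = (G.map g.op).map ((φ.app (op Y)).map x) from fun _ => rfl] at hnat
    have hGG := Functor.congr_hom (show G.map (g ≫ f).op = G.map f.op ≫ G.map g.op by
      rw [op_comp, G.map_comp]) k
    rw [show ∀ {A B : ↑(G.obj (op X))} (x : A ⟶ B),
        ((G.map f.op ≫ G.map g.op)).map x
        = (G.map g.op).map ((G.map f.op).map x) from fun _ => rfl] at hGG
    simp only [Functor.map_comp, eqToHom_map, hw, hnat, hGG, Functor.map_inv,
      Category.assoc, eqToHom_trans, eqToHom_trans_assoc, eqToHom_refl,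
      Category.comp_id, Category.id_comp, IsIso.inv_hom_id, IsIso.inv_hom_id_assoc]
  obtain ⟨ι, V, g, hg, hSS⟩ := sieve_to_family K _ hS
  exact ⟨ι, V, g, hg, fun i => hSS i⟩

lemma L3_of_autInj (K : Pretopology C) (φ : F ⟶ G)
    (H : ∀ (X : C) (a : F.obj (op X)),
      Presheaf.IsLocallyInjective ((K.toGrothendieck).over X) (autMap φ X a))
    (X : C) (a : F.obj (op X)) (h : a ⟶ a)
    (hh : (φ.app (op X)).map h = 𝟙 ((φ.app (op X)).obj a)) :
    ∃ (ι : Type u) (V : ι → C) (g : ∀ i, V i ⟶ X),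
      Presieve.ofArrows V g ∈ K.coverings X ∧
      ∀ i, (F.map (g i).op).map h = 𝟙 ((F.map (g i).op).obj a) := by
  have q : (F.map (𝟙 X).op).obj a = a := by rw [op_id]; exact grpd_map_obj_id F (op X) a
  set x : (autPre F X a).obj (op (Over.mk (𝟙 X))) := eqToHom q ≫ h ≫ eqToHom q.symm with hxdef
  set y : (autPre F X a).obj (op (Over.mk (𝟙 X))) := 𝟙 _ with hydef
  have hxy : (autMap φ X a).app (op (Over.mk (𝟙 X))) x = (autMap φ X a).app _ y := by
    show eqToHom _ ≫ (φ.app (op X)).map (eqToHom q ≫ h ≫ eqToHom q.symm) ≫ eqToHom _ =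
      eqToHom _ ≫ (φ.app (op X)).map (𝟙 _) ≫ eqToHom _
    simp [autMap, hxdef, hydef, hh, eqToHom_map]
  have hmem := Presheaf.equalizerSieve_mem ((K.toGrothendieck).over X) (autMap φ X a) x y hxy
  rw [GrothendieckTopology.mem_over_iff] at hmem
  obtain ⟨ι, V, g, hg, hS⟩ := sieve_to_family K _ hmem
  refine ⟨ι, V, g, hg, fun i => ?_⟩
  have hx2 := (Sieve.overEquiv_iff _ _).1 (hS i)
  have hx3 : (F.map (g i).op).map x = (F.map (g i).op).map y :=
    (autPre_map_eq_iff a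
      ((Over.homMk (g i) rfl : Over.mk (g i ≫ (Over.mk (𝟙 X)).hom) ⟶ Over.mk (𝟙 X))) x y).1 hx2
  rw [hxdef, hydef] at hx3
  simp only [Functor.map_comp, Functor.map_id, eqToHom_map] at hx3
  rw [eqToHom_comp_iff, comp_eqToHom_iff] at hx3
  simpa using hx3

end MainProof

/-- A map of presheaves of groupoids on a site induces an isomorphism on sheaves of
homotopy groups if and only if it satisfies the local lifting conditions. -/
theorem inducesIso_iff_localLifting {F G : Cᵒᵖ ⥤ Grpd.{u, u}} (K : Pretopology C)
    (φ : F ⟶ G) :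
    InducesIsoOnHomotopySheaves K φ ↔ LocalLiftingConditions K φ := by
  constructor
  · rintro ⟨h0, hA⟩
    rw [← GrothendieckTopology.W_iff, GrothendieckTopology.W_iff_isLocallyBijective] at h0
    have hA' : ∀ (X : C) (a : F.obj (op X)),
        Presheaf.IsLocallyInjective ((K.toGrothendieck).over X) (autMap φ X a) ∧
        Presheaf.IsLocallySurjective ((K.toGrothendieck).over X) (autMap φ X a) := by
      intro X a
      have := hA X a
      rw [← GrothendieckTopology.W_iff, GrothendieckTopology.W_iff_isLocallyBijective] at this
      exact this
    exact
      { obj_lift := L1_of_pi0Surj K φ h0.2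
        hom_lift := L2_of K φ h0.1 (autSurjCond_of_autSurj K φ (fun X a => (hA' X a).2))
        hom_sep := L3_of_autInj K φ (fun X a => (hA' X a).1) }
  · intro h
    constructor
    · rw [← GrothendieckTopology.W_iff, GrothendieckTopology.W_iff_isLocallyBijective]
      exact ⟨pi0Inj_of_L2 K φ h, pi0Surj_of_L1 K φ h⟩
    · intro X a
      rw [← GrothendieckTopology.W_iff, GrothendieckTopology.W_iff_isLocallyBijective]
      exact ⟨autInj_of_L3 K φ h X a, autSurj_of_L2 K φ h X a⟩
end

section
/- Let C be a small category, I a small category, and D : I → Grpd/C a diagram of categories fibered in groupoids over C (with morphisms functors over C). Then the colimit of D computed in Cat/C is pre-fibered in groupoids over C. -/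
open CategoryTheory

universe u v

/-- A functor `F : E ⥤ C` is pre-fibered in groupoids if morphisms of `C` lift, and
lifts of commutative triangles exist and are unique up to composition with an
automorphism over the identity. -/
structure IsPreFiberedInGroupoids {E : Type*} {C : Type*} [Category E] [Category C]
    (F : E ⥤ C) : Prop where
  lift : ∀ ⦃X Y : C⦄ (f : Y ⟶ X) (X' : E) (hX : F.obj X' = X),
    ∃ (Y' : E) (f' : Y' ⟶ X') (hY : F.obj Y' = Y),
      F.map f' = eqToHom hY ≫ f ≫ eqToHom hX.symm
  liftTriangle : ∀ ⦃Y' Z' X' : E⦄ (f' : Y' ⟶ X') (g' : Z' ⟶ X')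
    (h : F.obj Y' ⟶ F.obj Z'), h ≫ F.map g' = F.map f' →
      ∃ h' : Y' ⟶ Z', h' ≫ g' = f' ∧ F.map h' = h
  liftUniqueUpToAut : ∀ ⦃Y' Z' X' : E⦄ (g' : Z' ⟶ X') (h₁ h₂ : Y' ⟶ Z'),
    h₁ ≫ g' = h₂ ≫ g' → F.map h₁ = F.map h₂ →
      ∃ φ : Y' ⟶ Y', IsIso φ ∧ F.map φ = 𝟙 (F.obj Y') ∧ φ ≫ h₁ = h₂

theorem iso_of_vertical {E : Type*} {C : Type*} [Category E] [Category C]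
    {F : E ⥤ C} (hF : IsFiberedInGroupoids F) {A B : E} (m : A ⟶ B)
    (e : F.obj A = F.obj B) (hm : F.map m = eqToHom e) : IsIso m := by
  obtain ⟨n, ⟨hn1, hn2⟩, -⟩ := hF.uniqueLift (𝟙 B) m (eqToHom e.symm)
    (by simp [hm])
  refine ⟨n, ?_, hn1⟩
  obtain ⟨w, -, hw⟩ := hF.uniqueLift m m (𝟙 _) (by simp)
  have h1 : m ≫ n = w := hw _ ⟨by rw [Category.assoc, hn1, Category.comp_id],
    by simp [F.map_comp, hm, hn2]⟩
  have h2 : 𝟙 A = w := hw _ ⟨by simp, by simp⟩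
  rw [h1, ← h2]

namespace ColimPrefib
open Limits


theorem catCompEq {X Y Z : Cat} (F : X ⟶ Y) (G : Y ⟶ Z) (H : X ⟶ Z)
    (h : F.toFunctor ⋙ G.toFunctor = H.toFunctor) : F ≫ G = H := by
  apply Cat.Hom.ext; rw [Cat.Hom.comp_toFunctor]; exact h

variable {C : Type u} [Category.{u} C] {I : Type u} [Category.{u} I]
  {D : I ⥤ Over (Cat.of C)} {c : Cocone D}

abbrev FF (c : Cocone D) : (↑c.pt.left : Type u) ⥤ C := c.pt.hom.toFunctor
abbrev ι (c : Cocone D) (i : I) : (↑(D.obj i).left : Type u) ⥤ ↑c.pt.left :=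
  (c.ι.app i).left.toFunctor
abbrev Fp (D : I ⥤ Over (Cat.of C)) (i : I) : (↑(D.obj i).left : Type u) ⥤ C :=
  (D.obj i).hom.toFunctor

theorem leg_w (c : Cocone D) (i : I) : (ι c i : _ ⥤ _) ⋙ FF c = Fp D i := by
  have := congrArg Cat.Hom.toFunctor (Over.w (c.ι.app i)); exact this

theorem hnat (c : Cocone D) {i j : I} (α : i ⟶ j) :
    (D.map α).left.toFunctor ⋙ (ι c j : _ ⥤ _) = ι c i := by
  have := congrArg CommaMorphism.left (c.w α)
  simp only [Over.comp_left] at this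
  exact congrArg Cat.Hom.toFunctor this

/-- morphisms of the colimit generated by leg images -/
inductive Gen (c : Cocone D) : ∀ ⦃A B : ↑c.pt.left⦄, (A ⟶ B) → Prop
  | atom {i : I} {x y : ↑(D.obj i).left} (m : x ⟶ y) : Gen c ((ι c i).map m)
  | id (A : ↑c.pt.left) : Gen c (𝟙 A)
  | comp {A B B' : ↑c.pt.left} (f : A ⟶ B) (g : B ⟶ B') :
      Gen c f → Gen c g → Gen c (f ≫ g)

def Wide (c : Cocone D) : Type u := ↑c.pt.left

/-- unwrap the type synonym -/
def unwrap (A : Wide c) : ↑c.pt.left := A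

def wrap (c : Cocone D) (A : ↑c.pt.left) : Wide c := A

structure WideHom (c : Cocone D) (A B : ↑c.pt.left) : Type u where
  val : A ⟶ B
  gen : Gen c val

theorem WideHom.ext' {A B : ↑c.pt.left} (f g : WideHom c A B) (h : f.val = g.val) :
    f = g := by cases f; cases g; cases h; rfl

instance : CategoryStruct.{u} (Wide c) where
  Hom A B := WideHom c (unwrap A) (unwrap B)
  id A := ⟨𝟙 (unwrap A), Gen.id _⟩
  comp f g := ⟨WideHom.val f ≫ WideHom.val g, Gen.comp _ _ (WideHom.gen f) (WideHom.gen g)⟩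

@[simp] theorem wide_id_val (A : Wide c) :
    WideHom.val (𝟙 A) = 𝟙 (unwrap A) := rfl

@[simp] theorem wide_comp_val {A B B' : Wide c} (f : A ⟶ B) (g : B ⟶ B') :
    WideHom.val (f ≫ g) = WideHom.val f ≫ WideHom.val g := rfl

instance : Category.{u} (Wide c) where
  id_comp f := WideHom.ext' _ _ (by simp)
  comp_id f := WideHom.ext' _ _ (by simp)
  assoc f g h := WideHom.ext' _ _ (by simp)

def wideForget (c : Cocone D) : Wide c ⥤ ↑c.pt.left where
  obj A := unwrap A
  map f := WideHom.val f
  map_id _ := rfl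
  map_comp _ _ := rfl

@[simp] theorem wide_eqToHom_val {A B : Wide c} (h : A = B) :
    WideHom.val (eqToHom h) = eqToHom (congrArg (wideForget c).obj h) := by
  cases h; rfl

theorem gen_eqToHom {A B : ↑c.pt.left} (h : A = B) : Gen c (eqToHom h) := by
  cases h; simpa using Gen.id A

def wideLift (c : Cocone D) (i : I) : (↑(D.obj i).left : Type u) ⥤ Wide c where
  obj x := wrap c ((ι c i).obj x)
  map m := ⟨(ι c i).map m, Gen.atom m⟩
  map_id x := WideHom.ext' _ _ (by simp; rfl)
  map_comp f g := WideHom.ext' _ _ (by simp; rfl)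

@[simp] theorem wideLift_map_val (c : Cocone D) (i : I) {x y : ↑(D.obj i).left}
    (m : x ⟶ y) : WideHom.val ((wideLift c i).map m) = (ι c i).map m := rfl

theorem hfor (c : Cocone D) (i : I) : (wideLift c i ⋙ wideForget c : _ ⥤ _) = ι c i := rfl

theorem hliftnat (c : Cocone D) {i j : I} (α : i ⟶ j) :
    (D.map α).left.toFunctor ⋙ wideLift c j = wideLift c i := by
  apply CategoryTheory.Functor.ext
  · intro x y f
    apply WideHom.ext'
    have h1 := Functor.congr_hom (hnat c α) f
    simp only [Functor.comp_map] at h1 ⊢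
    simp only [wide_comp_val, wide_eqToHom_val, wideLift_map_val]
    exact h1
  · intro x
    exact Functor.congr_obj (hnat c α) x

theorem hom_gen (hc : IsColimit c) : ∀ ⦃A B : ↑c.pt.left⦄ (u : A ⟶ B), Gen c u := by
  let ptHom : Cat.of (Wide c) ⟶ Cat.of C := (wideForget c ⋙ (c.pt.hom.toFunctor : _ ⥤ _)).toCatHom
  let pt : Over (Cat.of C) := Over.mk (X := Cat.of C) ptHom
  let leg : ∀ i : I, D.obj i ⟶ pt := fun i =>
    Over.homMk (U := D.obj i) (V := pt)
      (show (D.obj i).left ⟶ Cat.of (Wide c) from (wideLift c i).toCatHom)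
      (catCompEq _ _ _ (by
        show (wideLift c i ⋙ (wideForget c ⋙ (FF c : _ ⥤ _))) = Fp D i
        rw [← Functor.assoc, hfor c i]
        exact leg_w c i))
  let s : Cocone D :=
    { pt := pt
      ι :=
        { app := leg
          naturality := by
            intro i j α
            simp only [Functor.const_obj_map, Category.comp_id]
            apply Over.OverMorphism.ext
            show (D.map α).left ≫ (leg j).left = (leg i).left
            exact catCompEq _ _ _ (hliftnat c α) } }
  let forgetHom : pt ⟶ c.pt :=
    Over.homMk (U := pt) (V := c.pt)
      (show pt.left ⟶ c.pt.left from (wideForget c).toCatHom) rfl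
  have key : hc.desc s ≫ forgetHom = 𝟙 c.pt := by
    apply hc.hom_ext
    intro i
    rw [← Category.assoc, hc.fac s i]
    simp only [Category.comp_id]
    apply Over.OverMorphism.ext
    show (leg i).left ≫ forgetHom.left = (c.ι.app i).left
    exact catCompEq _ _ _ (hfor c i)
  have keyF : ((hc.desc s).left.toFunctor : _ ⥤ _) ⋙ (wideForget c) = 𝟭 _ := by
    have := congrArg CommaMorphism.left key
    simp only [Over.comp_left] at this
    exact congrArg Cat.Hom.toFunctor this
  intro A B u
  have h1 := Functor.congr_hom keyF u
  simp only [Functor.comp_map, Functor.id_map] at h1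
  have h2 : u = eqToHom (Functor.congr_obj keyF A).symm ≫
      (wideForget c).map ((hc.desc s).left.toFunctor.map u) ≫ eqToHom (Functor.congr_obj keyF B) := by
    erw [h1]; simp
  rw [h2]
  exact Gen.comp _ _ (gen_eqToHom _)
    (Gen.comp _ _ (WideHom.gen ((hc.desc s).left.toFunctor.map u)) (gen_eqToHom _))

/-- Induction principle for morphisms of the colimit. -/
theorem hom_induction (hc : IsColimit c)
    (P : ∀ ⦃A B : ↑c.pt.left⦄, (A ⟶ B) → Prop)
    (hatom : ∀ (i : I) ⦃x y : ↑(D.obj i).left⦄ (m : x ⟶ y), P ((ι c i).map m))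
    (hid : ∀ A, P (𝟙 A))
    (hcomp : ∀ ⦃A B B'⦄ (f : A ⟶ B) (g : B ⟶ B'), P f → P g → P (f ≫ g)) :
    ∀ ⦃A B⦄ (u : A ⟶ B), P u := by
  intro A B u
  induction hom_gen hc u with
  | atom m => exact hatom _ m
  | id A => exact hid A
  | comp f g _ _ hf hg => exact hcomp f g hf hg

theorem dleg_w (D : I ⥤ Over (Cat.of C)) {i j : I} (α : i ⟶ j) :
    ((D.map α).left.toFunctor : _ ⥤ _) ⋙ Fp D j = Fp D i := by
  have := congrArg Cat.Hom.toFunctor (Over.w (D.map α)); exact this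

/-- presentations -/
def PresT (D : I ⥤ Over (Cat.of C)) : Type u := Σ i : I, (↑(D.obj i).left : Type u)

def PRel (D : I ⥤ Over (Cat.of C)) : PresT D → PresT D → Prop := fun P Q =>
  ∃ α : P.1 ⟶ Q.1, (D.map α).left.toFunctor.obj P.2 = Q.2

def Codisc (X : Type u) : Type u := X

instance {X : Type u} : Category.{u} (Codisc X) where
  Hom _ _ := PUnit
  id _ := PUnit.unit
  comp _ _ := PUnit.unit

instance {T : Type u} (a b : Codisc T) : Subsingleton (a ⟶ b) :=
  ⟨fun f g => @Subsingleton.elim PUnit _ f g⟩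

theorem cdProd_hom_ext {A : Type u} [Category.{u} A] {T : Type u}
    {X Y : A × Codisc T} (f g : X ⟶ Y) (h : f.1 = g.1) : f = g :=
  Prod.ext h (Subsingleton.elim _ _)

theorem prod_eqToHom {A B : Type u} [Category.{u} A] [Category.{u} B]
    (X Y : A × B) (h : X = Y) :
    eqToHom h = (eqToHom (congrArg Prod.fst h), eqToHom (congrArg Prod.snd h)) := by
  cases h; rfl

def codiscLeg (D : I ⥤ Over (Cat.of C)) (i : I) :
    (↑(D.obj i).left : Type u) ⥤ (C × Codisc (Quot (PRel D))) where
  obj x := ((Fp D i).obj x, Quot.mk _ ⟨i, x⟩)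
  map m := ((Fp D i).map m, PUnit.unit)
  map_id x := by simp; rfl
  map_comp f g := by simp; rfl

theorem pres_eqvGen (hc : IsColimit c) {i j : I} (x : ↑(D.obj i).left)
    (y : ↑(D.obj j).left) (h : (ι c i).obj x = (ι c j).obj y) :
    Relation.EqvGen (PRel D) ⟨i, x⟩ ⟨j, y⟩ := by
  let pt : Over (Cat.of C) :=
    Over.mk (X := Cat.of C)
      (show Cat.of (C × Codisc (Quot (PRel D))) ⟶ Cat.of C from
        (CategoryTheory.Prod.fst C (Codisc (Quot (PRel D)))).toCatHom)
  let leg : ∀ i : I, D.obj i ⟶ pt := fun i =>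
    Over.homMk (U := D.obj i) (V := pt)
      (show (D.obj i).left ⟶ Cat.of (C × Codisc (Quot (PRel D))) from (codiscLeg D i).toCatHom)
      (catCompEq _ _ _ rfl)
  have hlegnat : ∀ {i j : I} (α : i ⟶ j), (D.map α).left.toFunctor ⋙ codiscLeg D j = codiscLeg D i := by
    intro i j α
    have hobjeq : ∀ a, ((D.map α).left.toFunctor ⋙ codiscLeg D j).obj a = (codiscLeg D i).obj a := by
      intro a
      refine Prod.ext (Functor.congr_obj (dleg_w D α) a) ?_
      exact (Quot.sound ⟨α, rfl⟩).symm
    refine CategoryTheory.Functor.ext hobjeq ?_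
    intro a b f
    have h1 := Functor.congr_hom (dleg_w D α) f
    simp only [Functor.comp_map] at h1
    rw [prod_eqToHom, prod_eqToHom]
    apply cdProd_hom_ext
    exact h1
  let s : Cocone D :=
    { pt := pt
      ι :=
        { app := leg
          naturality := by
            intro i j α
            simp only [Functor.const_obj_map, Category.comp_id]
            apply Over.OverMorphism.ext
            show (D.map α).left ≫ (leg j).left = (leg i).left
            exact catCompEq _ _ _ (hlegnat α) } }
  have fac : ∀ k : I, (ι c k : _ ⥤ _) ⋙ (hc.desc s).left.toFunctor = codiscLeg D k := by
    intro k
    have := congrArg CommaMorphism.left (hc.fac s k)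
    simp only [Over.comp_left] at this
    exact congrArg Cat.Hom.toFunctor this
  have hx : ((hc.desc s).left.toFunctor.obj ((ι c i).obj x)).2 = Quot.mk _ ⟨i, x⟩ :=
    congrArg Prod.snd (Functor.congr_obj (fac i) x)
  have hy : ((hc.desc s).left.toFunctor.obj ((ι c j).obj y)).2 = Quot.mk _ ⟨j, y⟩ :=
    congrArg Prod.snd (Functor.congr_obj (fac j) y)
  rw [h] at hx
  exact Quot.eq.mp (hx.symm.trans hy)


theorem fs_ext {P : ↑c.pt.left → Prop} (X Y : ObjectProperty.FullSubcategory P) (h : X.obj = Y.obj) :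
    X = Y := by cases X; cases Y; dsimp at h; subst h; rfl

theorem fs_eqToHom {P : ↑c.pt.left → Prop} (X Y : ObjectProperty.FullSubcategory P) (h : X = Y) :
    (eqToHom h : X ⟶ Y).hom = eqToHom (congrArg ObjectProperty.FullSubcategory.obj h) := by
  cases h; rfl

theorem obj_surj (hc : IsColimit c) (A : ↑c.pt.left) :
    ∃ (i : I) (x : ↑(D.obj i).left), (ι c i).obj x = A := by
  set P : ↑c.pt.left → Prop := fun A => ∃ i x, (ι c i).obj x = A with hP
  let lift : ∀ i : I, (↑(D.obj i).left : Type u) ⥤ ObjectProperty.FullSubcategory P := fun i =>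
    ObjectProperty.lift P (ι c i) (fun x => ⟨i, x, rfl⟩)
  let ptHom : Cat.of (ObjectProperty.FullSubcategory P) ⟶ Cat.of C :=
    (ObjectProperty.ι P ⋙ (c.pt.hom.toFunctor : _ ⥤ _)).toCatHom
  let pt : Over (Cat.of C) := Over.mk (X := Cat.of C) ptHom
  have hlift : ∀ {i j : I} (α : i ⟶ j), (D.map α).left.toFunctor ⋙ lift j = lift i := by
    intro i j α
    apply CategoryTheory.Functor.ext
    · intro x y f
      have h1 := Functor.congr_hom (hnat c α) f
      ext
      show (ι c j).map ((D.map α).left.toFunctor.map f) = _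
      rw [ObjectProperty.FullSubcategory.comp_hom, ObjectProperty.FullSubcategory.comp_hom,
        fs_eqToHom, fs_eqToHom]
      simp only [Functor.comp_map] at h1
      rw [h1]
      rfl
    · intro x
      exact fs_ext _ _ (Functor.congr_obj (hnat c α) x)
  let legF : ∀ i : I, (D.obj i).left ⟶ Cat.of (ObjectProperty.FullSubcategory P) := fun i => (lift i).toCatHom
  let leg : ∀ i : I, D.obj i ⟶ pt := fun i =>
    Over.homMk (U := D.obj i) (V := pt) (legF i)
      (catCompEq _ _ _ (by
        show (lift i ⋙ (ObjectProperty.ι P ⋙ (FF c : _ ⥤ _))) = Fp D i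
        rw [← Functor.assoc]
        exact leg_w c i))
  let s : Cocone D :=
    { pt := pt
      ι :=
        { app := leg
          naturality := by
            intro i j α
            simp only [Functor.const_obj_map, Category.comp_id]
            apply Over.OverMorphism.ext
            show (D.map α).left ≫ (leg j).left = (leg i).left
            exact catCompEq _ _ _ (hlift α) } }
  let inclHom : pt ⟶ c.pt :=
    Over.homMk (U := pt) (V := c.pt)
      (show pt.left ⟶ c.pt.left from (ObjectProperty.ι P).toCatHom) rfl
  have key : hc.desc s ≫ inclHom = 𝟙 c.pt := by
    apply hc.hom_ext
    intro i
    rw [← Category.assoc, hc.fac s i]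
    simp only [Category.comp_id]
    apply Over.OverMorphism.ext
    show (leg i).left ≫ inclHom.left = (c.ι.app i).left
    exact catCompEq _ _ _ rfl
  have keyF : ((hc.desc s).left.toFunctor : _ ⥤ _) ⋙ (ObjectProperty.ι P) = 𝟭 _ := by
    have := congrArg CommaMorphism.left key
    simp only [Over.comp_left] at this
    exact congrArg Cat.Hom.toFunctor this
  have h2 : (ObjectProperty.ι P).obj ((hc.desc s).left.toFunctor.obj A) = A :=
    Functor.congr_obj keyF A
  obtain ⟨i, x, hx⟩ := ((hc.desc s).left.toFunctor.obj A).property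
  exact ⟨i, x, hx.trans h2⟩


-- ### piece-level helpers and base bookkeeping

theorem hobjF (c : Cocone D) (i : I) (x : ↑(D.obj i).left) :
    (FF c).obj ((ι c i).obj x) = (Fp D i).obj x :=
  Functor.congr_obj (leg_w c i) x

theorem hmapF (c : Cocone D) (i : I) {x y : ↑(D.obj i).left} (m : x ⟶ y) :
    (FF c).map ((ι c i).map m)
      = eqToHom (hobjF c i x) ≫ (Fp D i).map m ≫ eqToHom (hobjF c i y).symm := by
  have := Functor.congr_hom (leg_w c i) m
  simpa using this

theorem vert_inv {E : Type*} [Category E] {F : E ⥤ C} {A B : E} (ψ : A ⟶ B)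
    [IsIso ψ] {e : F.obj A = F.obj B} (hψ : F.map ψ = eqToHom e) :
    F.map (inv ψ) = eqToHom e.symm := by
  have h1 : F.map ψ ≫ F.map (inv ψ) = 𝟙 _ := by
    rw [← F.map_comp, IsIso.hom_inv_id, F.map_id]
  rw [hψ] at h1
  calc F.map (inv ψ) = eqToHom e.symm ≫ (eqToHom e ≫ F.map (inv ψ)) := by simp
  _ = eqToHom e.symm := by rw [h1, Category.comp_id]

-- ### the zigzag comparison lemma

theorem eqvgen_proj (c : Cocone D) {P Q : PresT D}
    (h : Relation.EqvGen (PRel D) P Q) :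
    (ι c P.1).obj P.2 = (ι c Q.1).obj Q.2 := by
  induction h with
  | rel P Q hr =>
    obtain ⟨α, hα⟩ := hr
    rw [← hα]
    exact (Functor.congr_obj (hnat c α) P.2).symm
  | refl P => rfl
  | symm P Q _ ih => exact ih.symm
  | trans P Q R _ _ ih1 ih2 => exact ih1.trans ih2

theorem zig (hc : IsColimit c) (hD : ∀ i : I, IsFiberedInGroupoids (Fp D i))
    {j i : I} {xA : ↑(D.obj j).left} {xB : ↑(D.obj i).left}
    (hEq : (ι c j).obj xA = (ι c i).obj xB) {y : ↑(D.obj j).left} (b₀ : y ⟶ xA) :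
    ∃ (y' : ↑(D.obj i).left) (b : y' ⟶ xB) (ψ : (ι c j).obj y ⟶ (ι c i).obj y')
      (e : (FF c).obj ((ι c j).obj y) = (FF c).obj ((ι c i).obj y')),
      IsIso ψ ∧ (FF c).map ψ = eqToHom e ∧
        ψ ≫ (ι c i).map b ≫ eqToHom hEq.symm = (ι c j).map b₀ := by
  have main : ∀ (P Q : PresT D), Relation.EqvGen (PRel D) P Q →
      ∀ (hEq : (ι c P.1).obj P.2 = (ι c Q.1).obj Q.2) (y : ↑(D.obj P.1).left)
        (b₀ : y ⟶ P.2),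
      ∃ (y' : ↑(D.obj Q.1).left) (b : y' ⟶ Q.2)
        (ψ : (ι c P.1).obj y ⟶ (ι c Q.1).obj y')
        (e : (FF c).obj ((ι c P.1).obj y) = (FF c).obj ((ι c Q.1).obj y')),
        IsIso ψ ∧ (FF c).map ψ = eqToHom e ∧
          ψ ≫ (ι c Q.1).map b ≫ eqToHom hEq.symm = (ι c P.1).map b₀ := by
    intro P Q hPQ
    induction hPQ with
    | rel P Q hr =>
      obtain ⟨α, hα⟩ := hr
      intro hEq y b₀
      refine ⟨(D.map α).left.toFunctor.obj y, (D.map α).left.toFunctor.map b₀ ≫ eqToHom hα,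
        eqToHom (Functor.congr_obj (hnat c α) y).symm,
        congrArg (FF c).obj (Functor.congr_obj (hnat c α) y).symm, inferInstance,
        eqToHom_map _ _, ?_⟩
      have h1 := Functor.congr_hom (hnat c α) b₀
      simp only [Functor.comp_map] at h1
      simp [h1, eqToHom_map]
    | refl P =>
      intro hEq y b₀
      exact ⟨y, b₀, 𝟙 _, rfl, inferInstance, by simp, by simp⟩
    | symm P Q hr ih =>
      intro hEq y b₀
      -- hEq : ι_Q Q.2 = ι_P P.2, b₀ : y ⟶ Q.2 in piece Q.1
      obtain ⟨y₁, b', hY, hb'⟩ := (hD P.1).lift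
        (eqToHom (hobjF c Q.1 y).symm ≫ (FF c).map ((ι c Q.1).map b₀) ≫
          eqToHom (congrArg (FF c).obj hEq) ≫ eqToHom (hobjF c P.1 P.2)) P.2 rfl
      obtain ⟨y₂, b'', ψ'', e'', hiso'', hvert'', hcomm''⟩ := ih hEq.symm y₁ b'
      have hv : (Fp D Q.1).obj y₂ = (Fp D Q.1).obj y := by
        rw [← hobjF c Q.1 y₂, ← e'', hobjF c P.1 y₁, hY]
      have hbase : eqToHom hv ≫ (Fp D Q.1).map b₀ = (Fp D Q.1).map b'' := by
        have hFF := congrArg (FF c).map hcomm''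
        rw [(FF c).map_comp, (FF c).map_comp, hvert'', eqToHom_map,
          hmapF c Q.1 b'', hmapF c P.1 b'] at hFF
        rw [hb'] at hFF
        simp only [eqToHom_refl, Category.comp_id, Category.assoc, eqToHom_trans,
          eqToHom_trans_assoc] at hFF
        rw [hmapF c Q.1 b₀] at hFF
        simp only [Category.assoc, eqToHom_trans, eqToHom_trans_assoc] at hFF
        simp only [eqToHom_comp_iff, comp_eqToHom_iff] at hFF
        rw [hFF]
        simp [eqToHom_trans]
      obtain ⟨m, ⟨hm1, hm2⟩, -⟩ := (hD Q.1).uniqueLift b'' b₀ (eqToHom hv) hbase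
      have him : IsIso m := iso_of_vertical (hD Q.1) m hv hm2
      have hχiso : IsIso (ψ'' ≫ (ι c Q.1).map m) := inferInstance
      have e : (FF c).obj ((ι c Q.1).obj y) = (FF c).obj ((ι c P.1).obj y₁) :=
        (hobjF c Q.1 y).trans (hY.symm.trans (hobjF c P.1 y₁).symm)
      have hχ : (FF c).map (ψ'' ≫ (ι c Q.1).map m) = eqToHom e.symm := by
        rw [(FF c).map_comp, hvert'', hmapF c Q.1 m, hm2]
        simp [eqToHom_trans]
      refine ⟨y₁, b', inv (ψ'' ≫ (ι c Q.1).map m), e, inferInstance,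
        vert_inv _ hχ, ?_⟩
      rw [IsIso.inv_comp_eq]
      simp only [Category.assoc]
      rw [← (ι c Q.1).map_comp, hm1, ← hcomm'']
      simp [eqToHom_trans]
    | trans P Q R hpq hqr ih1 ih2 =>
      intro hEq y b₀
      obtain ⟨y₁, b₁, ψ₁, e₁, hiso₁, hvert₁, hcomm₁⟩ := ih1 (eqvgen_proj c hpq) y b₀
      obtain ⟨y₂, b₂, ψ₂, e₂, hiso₂, hvert₂, hcomm₂⟩ := ih2 (eqvgen_proj c hqr) y₁ b₁
      refine ⟨y₂, b₂, ψ₁ ≫ ψ₂, e₁.trans e₂, inferInstance, ?_, ?_⟩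
      · rw [(FF c).map_comp, hvert₁, hvert₂, eqToHom_trans]
      · rw [← hcomm₁, ← hcomm₂]
        simp [eqToHom_trans]
  exact main ⟨j, xA⟩ ⟨i, xB⟩ (pres_eqvGen hc _ _ hEq) hEq y b₀


-- ### the master transport lemma

theorem zmain (hc : IsColimit c) (hD : ∀ i : I, IsFiberedInGroupoids (Fp D i))
    {A B : ↑c.pt.left} (τ : A ⟶ B) :
    ∀ (j : I) (xA : ↑(D.obj j).left) (hA : (ι c j).obj xA = A)
      {y : ↑(D.obj j).left} (b₀ : y ⟶ xA)
      (i : I) (xB : ↑(D.obj i).left) (hB : (ι c i).obj xB = B),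
      ∃ (y' : ↑(D.obj i).left) (b : y' ⟶ xB) (ψ : (ι c j).obj y ⟶ (ι c i).obj y')
        (e : (FF c).obj ((ι c j).obj y) = (FF c).obj ((ι c i).obj y')),
        IsIso ψ ∧ (FF c).map ψ = eqToHom e ∧
          ψ ≫ (ι c i).map b ≫ eqToHom hB = (ι c j).map b₀ ≫ eqToHom hA ≫ τ := by
  induction τ using hom_induction hc with
  | hatom i₀ m =>
    rename_i x₀ y₀
    intro j xA hA y b₀ i xB hB
    obtain ⟨y₁, b₁, ψ₁, e₁, hiso₁, hvert₁, hcomm₁⟩ := zig hc hD hA b₀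
    obtain ⟨y₂, b₂, ψ₂, e₂, hiso₂, hvert₂, hcomm₂⟩ := zig hc hD
      (hB.symm : (ι c i₀).obj y₀ = (ι c i).obj xB) (b₁ ≫ m)
    refine ⟨y₂, b₂, ψ₁ ≫ ψ₂, e₁.trans e₂, inferInstance, ?_, ?_⟩
    · rw [(FF c).map_comp, hvert₁, hvert₂, eqToHom_trans]
    · calc (ψ₁ ≫ ψ₂) ≫ (ι c i).map b₂ ≫ eqToHom hB
          = ψ₁ ≫ (ψ₂ ≫ (ι c i).map b₂ ≫ eqToHom hB.symm.symm) := by simp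
        _ = ψ₁ ≫ (ι c i₀).map (b₁ ≫ m) := by rw [hcomm₂]
        _ = (ψ₁ ≫ (ι c i₀).map b₁ ≫ eqToHom hA.symm) ≫ eqToHom hA ≫ (ι c i₀).map m := by
              rw [(ι c i₀).map_comp]; simp
        _ = (ι c j).map b₀ ≫ eqToHom hA ≫ (ι c i₀).map m := by rw [hcomm₁]
  | hid A =>
    intro j xA hA y b₀ i xB hB
    obtain ⟨y₁, b₁, ψ₁, e₁, hiso₁, hvert₁, hcomm₁⟩ := zig hc hD
      (hA.trans hB.symm : (ι c j).obj xA = (ι c i).obj xB) b₀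
    refine ⟨y₁, b₁, ψ₁, e₁, hiso₁, hvert₁, ?_⟩
    rw [← hcomm₁]
    simp [eqToHom_trans]
  | hcomp τ₁ τ₂ ih₁ ih₂ =>
    intro j xA hA y b₀ i xB hB
    obtain ⟨j₀, m₀, hM⟩ := obj_surj hc _
    obtain ⟨y₁, b₁, ψ₁, e₁, hiso₁, hvert₁, hcomm₁⟩ := ih₁ j xA hA b₀ j₀ m₀ hM
    obtain ⟨y₂, b₂, ψ₂, e₂, hiso₂, hvert₂, hcomm₂⟩ := ih₂ j₀ m₀ hM b₁ i xB hB
    refine ⟨y₂, b₂, ψ₁ ≫ ψ₂, e₁.trans e₂, inferInstance, ?_, ?_⟩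
    · rw [(FF c).map_comp, hvert₁, hvert₂, eqToHom_trans]
    · calc (ψ₁ ≫ ψ₂) ≫ (ι c i).map b₂ ≫ eqToHom hB
          = ψ₁ ≫ (ψ₂ ≫ (ι c i).map b₂ ≫ eqToHom hB) := by simp
        _ = ψ₁ ≫ ((ι c j₀).map b₁ ≫ eqToHom hM ≫ τ₂) := by rw [hcomm₂]
        _ = (ψ₁ ≫ (ι c j₀).map b₁ ≫ eqToHom hM) ≫ τ₂ := by simp
        _ = ((ι c j).map b₀ ≫ eqToHom hA ≫ τ₁) ≫ τ₂ := by rw [hcomm₁]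
        _ = (ι c j).map b₀ ≫ eqToHom hA ≫ τ₁ ≫ τ₂ := by simp

-- ### normal form lemma

theorem nf (hc : IsColimit c) (hD : ∀ i : I, IsFiberedInGroupoids (Fp D i))
    {R B : ↑c.pt.left} (q : R ⟶ B) :
    ∀ (i : I) (x : ↑(D.obj i).left) (τ : B ⟶ (ι c i).obj x)
      (eτ : (FF c).obj B = (FF c).obj ((ι c i).obj x))
      (hτ : (FF c).map τ = eqToHom eτ) (hiso : IsIso τ),
    ∃ (y : ↑(D.obj i).left) (b : y ⟶ x) (ψ : R ⟶ (ι c i).obj y)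
      (e : (FF c).obj R = (FF c).obj ((ι c i).obj y)),
      IsIso ψ ∧ (FF c).map ψ = eqToHom e ∧ ψ ≫ (ι c i).map b = q ≫ τ := by
  induction q using hom_induction hc with
  | hatom j m =>
    rename_i x₀ y₀
    intro i x τ eτ hτ hiso
    obtain ⟨y', b, ψ, e, hiso', hvert', hcomm'⟩ := zmain hc hD τ j y₀ rfl m i x rfl
    refine ⟨y', b, ψ, e, hiso', hvert', ?_⟩
    simpa using hcomm'
  | hid A =>
    intro i x τ eτ hτ hiso
    exact ⟨x, 𝟙 x, τ, eτ, hiso, hτ, by simp⟩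
  | hcomp q₁ q₂ ih₁ ih₂ =>
    intro i x τ eτ hτ hiso
    obtain ⟨y₂, b₂, ψ₂, e₂, hiso₂, hvert₂, h₂⟩ := ih₂ i x τ eτ hτ hiso
    obtain ⟨y₁, b₁, ψ₁, e₁, hiso₁, hvert₁, h₁⟩ := ih₁ i y₂ ψ₂ e₂ hvert₂ hiso₂
    refine ⟨y₁, b₁ ≫ b₂, ψ₁, e₁, hiso₁, hvert₁, ?_⟩
    rw [(ι c i).map_comp, ← Category.assoc, h₁]
    simp [h₂]
end ColimPrefib


open ColimPrefib in
/-- The colimit, computed in `Cat/C`, of a diagram of categories fibered in groupoids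
over a small category `C` is pre-fibered in groupoids. -/
theorem colimit_of_fibered_is_prefibered (C : Type u) [Category.{u} C]
    {I : Type u} [Category.{u} I] (D : I ⥤ Over (Cat.of C))
    (hD : ∀ i : I, IsFiberedInGroupoids ((D.obj i).hom.toFunctor : _ ⥤ _))
    (c : Limits.Cocone D) (hc : Limits.IsColimit c) :
    IsPreFiberedInGroupoids (c.pt.hom.toFunctor : _ ⥤ _) := by

  replace hD : ∀ i : I, IsFiberedInGroupoids (Fp D i) := hD
  show IsPreFiberedInGroupoids (FF c)
  constructor
  · -- lift
    intro X Y f X' hX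
    obtain ⟨p, ξ, hξ⟩ := obj_surj hc X'
    have e1 : (Fp D p).obj ξ = X := (hobjF c p ξ).symm.trans ((congrArg (FF c).obj hξ).trans hX)
    obtain ⟨w, a, hw, ha⟩ := (hD p).lift (f ≫ eqToHom e1.symm) ξ rfl
    refine ⟨(ι c p).obj w, (ι c p).map a ≫ eqToHom hξ, (hobjF c p w).trans hw, ?_⟩
    rw [(FF c).map_comp, hmapF c p a, ha, eqToHom_map]
    simp [eqToHom_trans]
  · -- liftTriangle
    intro Y' Z' X' f' g' h hcomm
    obtain ⟨p, ξ, hξ⟩ := obj_surj hc X'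
    have hτ : (FF c).map (eqToHom hξ.symm : X' ⟶ (ι c p).obj ξ)
        = eqToHom (congrArg (FF c).obj hξ.symm) := eqToHom_map _ _
    obtain ⟨yf, bf, ψf, ef, isof, vertf, hf⟩ :=
      nf hc hD f' p ξ (eqToHom hξ.symm) _ hτ inferInstance
    obtain ⟨zg, bg, ψg, eg, isog, vertg, hg⟩ :=
      nf hc hD g' p ξ (eqToHom hξ.symm) _ hτ inferInstance
    have hFf := congrArg (FF c).map hf
    rw [(FF c).map_comp, (FF c).map_comp, vertf, hmapF c p bf, eqToHom_map] at hFf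
    simp only [eqToHom_comp_iff, comp_eqToHom_iff, Category.assoc, eqToHom_trans,
      eqToHom_trans_assoc] at hFf
    have hFg := congrArg (FF c).map hg
    rw [(FF c).map_comp, (FF c).map_comp, vertg, hmapF c p bg, eqToHom_map] at hFg
    simp only [eqToHom_comp_iff, comp_eqToHom_iff, Category.assoc, eqToHom_trans,
      eqToHom_trans_assoc] at hFg
    have cond : (eqToHom ((hobjF c p yf).symm.trans ef.symm) ≫ h ≫
        eqToHom (eg.trans (hobjF c p zg))) ≫ (Fp D p).map bg = (Fp D p).map bf := by
      rw [hFf, hFg, ← hcomm]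
      simp [eqToHom_trans]
    obtain ⟨m, ⟨hm1, hm2⟩, -⟩ := (hD p).uniqueLift bf bg _ cond
    have hg' : g' = ψg ≫ (ι c p).map bg ≫ eqToHom hξ := by
      rw [← Category.assoc, hg]; simp
    refine ⟨ψf ≫ (ι c p).map m ≫ inv ψg, ?_, ?_⟩
    · rw [hg']
      calc (ψf ≫ (ι c p).map m ≫ inv ψg) ≫ ψg ≫ (ι c p).map bg ≫ eqToHom hξ
          = ψf ≫ (ι c p).map m ≫ (inv ψg ≫ ψg) ≫ (ι c p).map bg ≫ eqToHom hξ := by simp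
        _ = ψf ≫ (ι c p).map (m ≫ bg) ≫ eqToHom hξ := by simp [(ι c p).map_comp]
        _ = (ψf ≫ (ι c p).map bf) ≫ eqToHom hξ := by rw [hm1, Category.assoc]
        _ = f' := by rw [hf]; simp
    · rw [(FF c).map_comp, (FF c).map_comp, vertf, hmapF c p m, hm2,
        vert_inv ψg vertg]
      simp [eqToHom_trans]
  · -- liftUniqueUpToAut
    intro Y' Z' X' g' h₁ h₂ hcomm hbase
    obtain ⟨p, ζ, hζ⟩ := obj_surj hc Z'
    have hτ : (FF c).map (eqToHom hζ.symm : Z' ⟶ (ι c p).obj ζ)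
        = eqToHom (congrArg (FF c).obj hζ.symm) := eqToHom_map _ _
    obtain ⟨y₁, b₁, ψ₁, e₁, iso₁, vert₁, H₁⟩ :=
      nf hc hD h₁ p ζ (eqToHom hζ.symm) _ hτ inferInstance
    obtain ⟨y₂, b₂, ψ₂, e₂, iso₂, vert₂, H₂⟩ :=
      nf hc hD h₂ p ζ (eqToHom hζ.symm) _ hτ inferInstance
    have HF₁ := congrArg (FF c).map H₁
    rw [(FF c).map_comp, (FF c).map_comp, vert₁, hmapF c p b₁, eqToHom_map] at HF₁
    simp only [eqToHom_comp_iff, comp_eqToHom_iff, Category.assoc, eqToHom_trans,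
      eqToHom_trans_assoc] at HF₁
    have HF₂ := congrArg (FF c).map H₂
    rw [(FF c).map_comp, (FF c).map_comp, vert₂, hmapF c p b₂, eqToHom_map] at HF₂
    simp only [eqToHom_comp_iff, comp_eqToHom_iff, Category.assoc, eqToHom_trans,
      eqToHom_trans_assoc] at HF₂
    have hv : (Fp D p).obj y₁ = (Fp D p).obj y₂ :=
      (hobjF c p y₁).symm.trans (e₁.symm.trans (e₂.trans (hobjF c p y₂)))
    have cond : eqToHom hv ≫ (Fp D p).map b₂ = (Fp D p).map b₁ := by
      rw [HF₁, HF₂, hbase]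
      simp [eqToHom_trans]
    obtain ⟨m, ⟨hm1, hm2⟩, -⟩ := (hD p).uniqueLift b₁ b₂ (eqToHom hv) cond
    have him : IsIso m := iso_of_vertical (hD p) m hv hm2
    have hιm : IsIso ((ι c p).map m) := inferInstance
    have hFιm : (FF c).map ((ι c p).map m)
        = eqToHom ((hobjF c p y₁).trans (hv.trans (hobjF c p y₂).symm)) := by
      rw [hmapF c p m, hm2]
      simp [eqToHom_trans]
    have hone : h₁ = ψ₁ ≫ (ι c p).map b₁ ≫ eqToHom hζ := by
      rw [← Category.assoc, H₁]; simp
    have htwo : h₂ = ψ₂ ≫ (ι c p).map b₂ ≫ eqToHom hζ := by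
      rw [← Category.assoc, H₂]; simp
    refine ⟨ψ₂ ≫ inv ((ι c p).map m) ≫ inv ψ₁, inferInstance, ?_, ?_⟩
    · rw [(FF c).map_comp, (FF c).map_comp, vert₂, vert_inv _ hFιm, vert_inv ψ₁ vert₁]
      simp [eqToHom_trans]
    · rw [hone, htwo]
      calc (ψ₂ ≫ inv ((ι c p).map m) ≫ inv ψ₁) ≫ ψ₁ ≫ (ι c p).map b₁ ≫ eqToHom hζ
          = ψ₂ ≫ inv ((ι c p).map m) ≫ (inv ψ₁ ≫ ψ₁) ≫ (ι c p).map b₁ ≫ eqToHom hζ := by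
            simp
        _ = ψ₂ ≫ inv ((ι c p).map m) ≫ (ι c p).map (m ≫ b₂) ≫ eqToHom hζ := by
            rw [hm1]; simp
        _ = ψ₂ ≫ (inv ((ι c p).map m) ≫ (ι c p).map m) ≫ (ι c p).map b₂ ≫ eqToHom hζ := by
            simp [(ι c p).map_comp]
        _ = ψ₂ ≫ (ι c p).map b₂ ≫ eqToHom hζ := by simp
end

section
/- Let A, B, C be small categories, let i : A → B be a functor that is injective on objects, and let j : A → C be a functor that is an equivalence of categories and surjective on objects. Then for any pushout square in the category Cat of small categories with legs i and j, the induced functor B → P (where P = C ⊔_A B is the pushout) is an equivalence of categories and is surjective on objects. -/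
open CategoryTheory

universe u

namespace PushoutAux

variable {A B C : Type u} [Category.{u} A] [Category.{u} B] [Category.{u} C]

section K
variable (j : A ⥤ C) [j.Full] [j.Faithful] (hj : Function.Surjective j.obj)

noncomputable def K : C ⥤ A where
  obj c := (hj c).choose
  map {c c'} φ := j.preimage (eqToHom (hj c).choose_spec ≫ φ ≫ eqToHom (hj c').choose_spec.symm)
  map_id c := j.map_injective (by simp)
  map_comp φ ψ := j.map_injective (by simp)

@[simp] lemma K_obj_j (c : C) : j.obj ((K j hj).obj c) = c := (hj c).choose_spec

@[simp] lemma j_map_K {c c' : C} (φ : c ⟶ c') :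
    j.map ((K j hj).map φ) = eqToHom (K_obj_j j hj c) ≫ φ ≫ eqToHom (K_obj_j j hj c').symm := by
  simp [K]

lemma K_comp_j : K j hj ⋙ j = 𝟭 C :=
  CategoryTheory.Functor.ext (h_obj := fun c => K_obj_j j hj c) (h_map := fun c c' φ => by simp)

noncomputable def ηapp (a : A) : a ⟶ (K j hj).obj (j.obj a) :=
  j.preimage (eqToHom (K_obj_j j hj (j.obj a)).symm)

noncomputable def ηinv (a : A) : (K j hj).obj (j.obj a) ⟶ a :=
  j.preimage (eqToHom (K_obj_j j hj (j.obj a)))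

@[simp] lemma j_map_ηapp (a : A) :
    j.map (ηapp j hj a) = eqToHom (K_obj_j j hj (j.obj a)).symm := j.map_preimage _

@[simp] lemma j_map_ηinv (a : A) :
    j.map (ηinv j hj a) = eqToHom (K_obj_j j hj (j.obj a)) := j.map_preimage _

@[simp] lemma ηapp_ηinv (a : A) : ηapp j hj a ≫ ηinv j hj a = 𝟙 a :=
  j.map_injective (by simp)

@[simp] lemma ηinv_ηapp (a : A) : ηinv j hj a ≫ ηapp j hj a = 𝟙 _ :=
  j.map_injective (by simp)

lemma η_conj {a a' : A} (φ : a ⟶ a') :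
    ηinv j hj a ≫ φ ≫ ηapp j hj a' = (K j hj).map (j.map φ) :=
  j.map_injective (by simp)

end K

section F
variable (j : A ⥤ C) [j.Full] [j.Faithful] (hj : Function.Surjective j.obj) (i : A ⥤ B)

open Classical in
noncomputable def fObj (b : B) : B :=
  if h : ∃ a, i.obj a = b then i.obj ((K j hj).obj (j.obj h.choose)) else b

open Classical in
noncomputable def θ (b : B) : b ≅ fObj j hj i b :=
  if h : ∃ a, i.obj a = b then
    eqToIso h.choose_spec.symm ≪≫
      i.mapIso ⟨ηapp j hj h.choose, ηinv j hj h.choose, by simp, by simp⟩ ≪≫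
      eqToIso (by rw [fObj, dif_pos h])
  else eqToIso (by rw [fObj, dif_neg h])

variable (hi : Function.Injective i.obj)
include hi in
lemma fObj_i (a : A) : fObj j hj i (i.obj a) = i.obj ((K j hj).obj (j.obj a)) := by
  have h : ∃ a', i.obj a' = i.obj a := ⟨a, rfl⟩
  rw [fObj, dif_pos h, hi h.choose_spec]

private lemma θaux (a₀ a : A) (e : a₀ = a) (p : i.obj a₀ = i.obj a) {X : B}
    (q : i.obj ((K j hj).obj (j.obj a₀)) = X) (r : i.obj ((K j hj).obj (j.obj a)) = X) :
    eqToHom p.symm ≫ i.map (ηapp j hj a₀) ≫ eqToHom q = i.map (ηapp j hj a) ≫ eqToHom r := by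
  subst e; subst q; simp

include hi in
lemma θ_i_hom (a : A) :
    (θ j hj i (i.obj a)).hom = i.map (ηapp j hj a) ≫ eqToHom (fObj_i j hj i hi a).symm := by
  have h : ∃ a', i.obj a' = i.obj a := ⟨a, rfl⟩
  rw [θ, dif_pos h]
  simp only [Iso.trans_hom, eqToIso.hom, Functor.mapIso_hom]
  exact θaux j hj i h.choose a (hi h.choose_spec) h.choose_spec _ _

include hi in
lemma θ_i_inv (a : A) :
    (θ j hj i (i.obj a)).inv = eqToHom (fObj_i j hj i hi a) ≫ i.map (ηinv j hj a) := by
  rw [← cancel_epi (θ j hj i (i.obj a)).hom, Iso.hom_inv_id, θ_i_hom j hj i hi]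
  simp [← i.map_comp]

noncomputable def F : B ⥤ B where
  obj := fObj j hj i
  map {b b'} φ := (θ j hj i b).inv ≫ φ ≫ (θ j hj i b').hom
  map_id b := by simp
  map_comp φ ψ := by simp

noncomputable def Θ : 𝟭 B ≅ F j hj i :=
  NatIso.ofComponents (fun b => θ j hj i b) (fun φ => by simp [F])

lemma θ_naturality {b b' : B} (φ : b ⟶ b') :
    φ ≫ (θ j hj i b').hom = (θ j hj i b).hom ≫ (F j hj i).map φ := by simp [F]

include hi in
lemma i_comp_F : i ⋙ F j hj i = j ⋙ (K j hj ⋙ i) :=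
  CategoryTheory.Functor.ext (h_obj := fun a => fObj_i j hj i hi a)
    (h_map := fun a a' φ => by
      simp only [Functor.comp_map, F, θ_i_hom j hj i hi, θ_i_inv j hj i hi]
      slice_lhs 2 4 => rw [← i.map_comp, ← i.map_comp]
      rw [η_conj]
      try simp)

end F

lemma arrow_mk_eq {T : Type u} [Category.{u} T] {X Y Z W : T} (f : X ⟶ Y) (g : Z ⟶ W)
    (hx : X = Z) (hy : Y = W) (h : f = eqToHom hx ≫ g ≫ eqToHom hy.symm) :
    Arrow.mk f = Arrow.mk g := by
  subst hx; subst hy; simp at h; rw [h]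

lemma arrow_hom_eq {T : Type u} [Category.{u} T] {u u' v v' : Arrow T} (hu : u = u') (hv : v = v')
    (f : u ⟶ v) (g : u' ⟶ v')
    (hleft : f.left = eqToHom (congrArg Comma.left hu) ≫ g.left ≫ eqToHom (congrArg Comma.left hv).symm)
    (hright : f.right = eqToHom (congrArg Comma.right hu) ≫ g.right ≫
      eqToHom (congrArg Comma.right hv).symm) :
    f = eqToHom hu ≫ g ≫ eqToHom hv.symm := by
  subst hu; subst hv
  simp only [eqToHom_refl, Category.comp_id, Category.id_comp] at hleft hright ⊢
  exact CommaMorphism.ext hleft hright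

lemma isIso_of_arrow_eq {T : Type u} [Category.{u} T] (u v : Arrow T) (h : u = v)
    (hu : IsIso u.hom) : IsIso v.hom := by subst h; exact hu

end PushoutAux

open PushoutAux

/-- Pushouts in `Cat` along a functor which is injective on objects of a functor which
is an equivalence surjective on objects: the induced functor `B ⟶ P` to any pushout of
the span `B ⟵ A ⟶ C` is again an equivalence of categories surjective on objects. -/
theorem pushout_of_surjective_equivalence
    {A B C P : Cat.{u, u}} (i : A ⟶ B) (j : A ⟶ C)
    (hi : Function.Injective (i.toFunctor : A ⥤ B).obj)
    (hj₁ : Functor.IsEquivalence (j.toFunctor : A ⥤ C))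
    (hj₂ : Function.Surjective (j.toFunctor : A ⥤ C).obj)
    (pB : B ⟶ P) (pC : C ⟶ P)
    (hpo : IsPushout i j pB pC) :
    Functor.IsEquivalence (pB.toFunctor : B ⥤ P) ∧ Function.Surjective (pB.toFunctor : B ⥤ P).obj := by
  classical
  haveI := hj₁.full
  haveI := hj₁.faithful
  have hw : i.toFunctor ⋙ pB.toFunctor = j.toFunctor ⋙ pC.toFunctor := congrArg Cat.Hom.toFunctor hpo.w
  -- the strict section of j
  set KK : ↥C ⥤ ↥A := K j.toFunctor hj₂ with hKK
  set FF : ↥B ⥤ ↥B := F j.toFunctor hj₂ i.toFunctor with hFF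
  have hsq : i ≫ (FF.toCatHom : B ⟶ B) = j ≫ ((KK ⋙ i.toFunctor).toCatHom : C ⟶ B) :=
    Cat.Hom.ext (i_comp_F j.toFunctor hj₂ i.toFunctor hi)
  let q : P ⟶ B := hpo.desc (FF.toCatHom : B ⟶ B) ((KK ⋙ i.toFunctor).toCatHom : C ⟶ B) hsq
  have hq1 : pB ≫ q = (FF.toCatHom : B ⟶ B) := hpo.inl_desc _ _ _
  have hq2 : pC ≫ q = ((KK ⋙ i.toFunctor).toCatHom : C ⟶ B) := hpo.inr_desc _ _ _
  -- pC factors through pB on objects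
  have hKfix : ∀ c, pC.toFunctor.obj c = pB.toFunctor.obj (i.toFunctor.obj (KK.obj c)) := by
    intro c
    have h1 := Functor.congr_obj hw (KK.obj c)
    simp only [Functor.comp_obj] at h1
    rw [h1, K_obj_j]
  -- surjectivity on objects
  have hsurj : Function.Surjective pB.toFunctor.obj := by
    intro X
    let pred : ObjectProperty ↥P := fun X => ∃ b, pB.toFunctor.obj b = X
    let ι : Cat.of pred.FullSubcategory ⟶ P := (ObjectProperty.ι pred).toCatHom
    let pB'' : B ⟶ Cat.of pred.FullSubcategory :=
      (ObjectProperty.lift pred pB.toFunctor (fun b => ⟨b, rfl⟩)).toCatHom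
    let pC'' : C ⟶ Cat.of pred.FullSubcategory :=
      (ObjectProperty.lift pred pC.toFunctor (fun c => ⟨_, (hKfix c).symm⟩)).toCatHom
    have hsq' : i ≫ pB'' = j ≫ pC'' := by
      refine Cat.Hom.ext <| CategoryTheory.Functor.ext (h_obj := fun a => ?_) (h_map := fun a a' φ => ?_)
      · exact ObjectProperty.FullSubcategory.ext (Functor.congr_obj hw a)
      · apply (ObjectProperty.ι pred).map_injective
        simp only [Cat.Hom.comp_toFunctor, Functor.comp_map]
        erw [Functor.map_comp, Functor.map_comp, eqToHom_map, eqToHom_map]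
        exact Functor.congr_hom hw φ
    let r : P ⟶ Cat.of pred.FullSubcategory := hpo.desc pB'' pC'' hsq'
    have hr : r ≫ ι = 𝟙 P := by
      apply hpo.hom_ext
      · rw [← Category.assoc, hpo.inl_desc, Category.comp_id]
        rfl
      · rw [← Category.assoc, hpo.inr_desc, Category.comp_id]
        rfl
    have h2 := Functor.congr_obj (congrArg Cat.Hom.toFunctor hr) X
    exact ⟨(r.toFunctor.obj X).property.choose,
      (r.toFunctor.obj X).property.choose_spec.trans h2⟩
  -- the comparison natural transformation via the arrow category
  let HB : B ⟶ Cat.of (Arrow ↥P) := Functor.toCatHom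
    { obj := fun b => Arrow.mk (pB.toFunctor.map (θ j.toFunctor hj₂ i.toFunctor b).hom)
      map := fun {b b'} φ => Arrow.homMk (u := pB.toFunctor.map φ)
        (v := pB.toFunctor.map (FF.map φ)) (by
          dsimp only [Arrow.mk_hom]
          exact (pB.toFunctor.map_comp _ _).symm.trans ((congrArg pB.toFunctor.map
            (θ_naturality j.toFunctor hj₂ i.toFunctor φ)).trans (pB.toFunctor.map_comp _ _)))
      map_id := fun b => by
        apply CommaMorphism.ext <;> simp
        exact pB.toFunctor.map_id _
      map_comp := fun φ ψ => by
        apply CommaMorphism.ext <;> simp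
        exact pB.toFunctor.map_comp _ _ }
  let HC : C ⟶ Cat.of (Arrow ↥P) := Functor.toCatHom
    { obj := fun c => Arrow.mk (𝟙 (pC.toFunctor.obj c))
      map := fun {c c'} γ => Arrow.homMk (u := pC.toFunctor.map γ)
        (v := pC.toFunctor.map γ) (by simp)
      map_id := fun c => by apply CommaMorphism.ext <;> simp
      map_comp := fun γ γ' => by apply CommaMorphism.ext <;> simp }
  have hobjBC : ∀ a : ↥A, HB.toFunctor.obj (i.toFunctor.obj a) =
      HC.toFunctor.obj (j.toFunctor.obj a) := by
    intro a
    refine arrow_mk_eq _ _ (Functor.congr_obj hw a)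
        ((congrArg pB.toFunctor.obj (fObj_i j.toFunctor hj₂ i.toFunctor hi a)).trans
          (hKfix (j.toFunctor.obj a)).symm) ?_
    rw [θ_i_hom j.toFunctor hj₂ i.toFunctor hi a, Functor.map_comp, eqToHom_map]
    have hη := Functor.congr_hom hw (ηapp j.toFunctor hj₂ a)
    simp only [Functor.comp_map] at hη
    rw [hη]
    simp [eqToHom_map]
  have hHsq : i ≫ HB = j ≫ HC := by
    refine Cat.Hom.ext <| CategoryTheory.Functor.ext (h_obj := fun a => hobjBC a) (h_map := fun a a' φ => ?_)
    refine arrow_hom_eq (hobjBC a) (hobjBC a') _ _ ?_ ?_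
    · dsimp [HB, HC]
      have h0 := Functor.congr_hom hw φ
      simp only [Functor.comp_map] at h0
      exact h0
    · show (HB.toFunctor.map (i.toFunctor.map φ)).right =
        _ ≫ (HC.toFunctor.map (j.toFunctor.map φ)).right ≫ _
      dsimp [HB, HC]
      change pB.toFunctor.map (FF.map (i.toFunctor.map φ)) = _ ≫ pC.toFunctor.map (j.toFunctor.map φ) ≫ _
      have h1 := Functor.congr_hom
        (show i.toFunctor ⋙ FF = j.toFunctor ⋙ (KK ⋙ i.toFunctor) from congrArg Cat.Hom.toFunctor hsq) φ
      simp only [Functor.comp_map] at h1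
      rw [h1]
      have h2 := Functor.congr_hom hw (KK.map (j.toFunctor.map φ))
      simp only [Functor.comp_map] at h2
      have h3 : j.toFunctor.map (KK.map (j.toFunctor.map φ)) =
          eqToHom (K_obj_j j.toFunctor hj₂ _) ≫ j.toFunctor.map φ ≫
            eqToHom (K_obj_j j.toFunctor hj₂ _).symm :=
        j_map_K j.toFunctor hj₂ _
      rw [Functor.map_comp, Functor.map_comp, eqToHom_map, eqToHom_map, h2, h3]
      simp [eqToHom_map]
      rfl
  let H : P ⟶ Cat.of (Arrow ↥P) := hpo.desc HB HC hHsq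
  let H' : ↥P ⥤ Arrow ↥P := H.toFunctor
  have hH1 : pB ≫ H = HB := hpo.inl_desc _ _ _
  have hH2 : pC ≫ H = HC := hpo.inr_desc _ _ _
  let L : Cat.of (Arrow ↥P) ⟶ P := Arrow.leftFunc.toCatHom
  let R : Cat.of (Arrow ↥P) ⟶ P := Arrow.rightFunc.toCatHom
  have hL : H ≫ L = 𝟙 P := by
    apply hpo.hom_ext
    · rw [← Category.assoc, hH1, Category.comp_id]
      rfl
    · rw [← Category.assoc, hH2, Category.comp_id]
      rfl
  have hcq : ((KK ⋙ i.toFunctor).toCatHom : C ⟶ B) ≫ pB = pC := by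
    apply Cat.Hom.ext
    show KK ⋙ (i.toFunctor ⋙ pB.toFunctor) = pC.toFunctor
    rw [hw]
    show (KK ⋙ j.toFunctor) ⋙ pC.toFunctor = pC.toFunctor
    rw [hKK, K_comp_j]
    rfl
  have hR : H ≫ R = q ≫ pB := by
    apply hpo.hom_ext
    · rw [← Category.assoc, hH1, ← Category.assoc, hq1]
      rfl
    · rw [← Category.assoc, hH2, ← Category.assoc, hq2]
      erw [hcq]
      rfl
  have hL' : H' ⋙ Arrow.leftFunc = 𝟭 ↥P := congrArg Cat.Hom.toFunctor hL
  have hR' : H' ⋙ Arrow.rightFunc = q.toFunctor ⋙ pB.toFunctor := congrArg Cat.Hom.toFunctor hR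
  have hLobj : ∀ X : ↥P, (H'.obj X).left = X := fun X => Functor.congr_obj hL' X
  have hRobj : ∀ X : ↥P, (H'.obj X).right = pB.toFunctor.obj (q.toFunctor.obj X) :=
    fun X => Functor.congr_obj hR' X
  let α : (𝟭 ↥P) ⟶ q.toFunctor ⋙ pB.toFunctor :=
    { app := fun X => eqToHom (hLobj X).symm ≫ (H'.obj X).hom ≫ eqToHom (hRobj X)
      naturality := fun X Y φ => by
        have l := Functor.congr_hom hL' φ
        have r := Functor.congr_hom hR' φ
        have w := Arrow.w (H'.map φ)
        simp only [Functor.comp_map, Arrow.leftFunc_map, Arrow.rightFunc_map, Functor.id_map] at l r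
        change (H'.map φ).left = eqToHom (hLobj X) ≫ φ ≫ eqToHom (hLobj Y).symm at l
        change (H'.map φ).right = eqToHom (hRobj X) ≫ pB.toFunctor.map (q.toFunctor.map φ) ≫
          eqToHom (hRobj Y).symm at r
        rw [l, r] at w
        have w2 := congrArg
          (fun t => eqToHom (hLobj X).symm ≫ t ≫ eqToHom (hRobj Y)) w
        simp only [Category.assoc, eqToHom_trans, eqToHom_trans_assoc, eqToHom_refl,
          Category.comp_id, Category.id_comp, Functor.comp_map] at w2
        simpa [Functor.comp_map] using w2 }
  have hiso : ∀ X : ↥P, IsIso (α.app X) := by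
    intro X
    obtain ⟨b, rfl⟩ := hsurj X
    have e : H'.obj (pB.toFunctor.obj b) = HB.toFunctor.obj b :=
      Functor.congr_obj
        (show pB.toFunctor ⋙ H' = HB.toFunctor from congrArg Cat.Hom.toFunctor hH1) b
    haveI : IsIso ((H'.obj (pB.toFunctor.obj b)).hom) := by
      refine isIso_of_arrow_eq _ _ e.symm ?_
      dsimp [HB]
      infer_instance
    dsimp [α]
    infer_instance
  haveI : ∀ X, IsIso (α.app X) := hiso
  haveI : IsIso α := NatIso.isIso_of_isIso_app α
  have hpBq : pB.toFunctor ⋙ q.toFunctor = FF := congrArg Cat.Hom.toFunctor hq1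
  let e : ↥B ≌ ↥P := CategoryTheory.Equivalence.mk pB.toFunctor q.toFunctor
    (Θ j.toFunctor hj₂ i.toFunctor ≪≫ eqToIso hpBq.symm) ((asIso α).symm)
  exact ⟨e.isEquivalence_functor, hsurj⟩
end
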